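/- arXiv:1406.0947 — 3 statements merged into one kernel-verified Lean document; each statement's English description precedes it below -/
import Mathlib

section
/- For every integer n ≥ 2, the number s(n) of stacks on [n] satisfies s(n) = 2^{n−1} · a_{n−2}, where (a_k)_{k≥0} are the (large) Schröder numbers, defined by the formal power series identity Σ_{k≥0} a_k x^k = (1 − x − √(1−6x+x²))/(2x). -/
open PowerSeries

namespace Paper

/-- The arc set of a diagram: a finite set of pairs `(i,j)`. -/
abbrev Arcs := Finset (ℕ × ℕ)

/-- A diagram on `[n] = {1,…,n}`: every arc `(i,j)` satisfies `1 ≤ i < j ≤ n`. -/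
def IsDiagram (n : ℕ) (A : Arcs) : Prop :=
  ∀ p ∈ A, 1 ≤ p.1 ∧ p.1 < p.2 ∧ p.2 ≤ n

/-- Two arcs `p = (i₁,j₁)` and `q = (i₂,j₂)` cross if `i₁ < i₂ < j₁ < j₂`. -/
def Crossing (p q : ℕ × ℕ) : Prop :=
  p.1 < q.1 ∧ q.1 < p.2 ∧ p.2 < q.2

/-- A stack on `[n]`: a diagram with no two crossing arcs. -/
def IsStack (n : ℕ) (A : Arcs) : Prop :=
  IsDiagram n A ∧ ∀ p ∈ A, ∀ q ∈ A, ¬ Crossing p q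

/-- Left-degree of vertex `v`: number of arcs `(u,v)` with `u < v`. -/
def ld (A : Arcs) (v : ℕ) : ℕ := (A.filter fun p => p.2 = v).card

/-- Right-degree of vertex `v`: number of arcs `(v,w)` with `v < w`. -/
def rd (A : Arcs) (v : ℕ) : ℕ := (A.filter fun p => p.1 = v).card

/-- Degree of a vertex. -/
def deg (A : Arcs) (v : ℕ) : ℕ := ld A v + rd A v

/-- A zigzag stack: a stack where every vertex has degree ≤ 2 and no vertex has both
positive left-degree and positive right-degree. -/
def IsZigzag (n : ℕ) (A : Arcs) : Prop :=
  IsStack n A ∧ (∀ v, deg A v ≤ 2) ∧ ∀ v, ¬ (1 ≤ ld A v ∧ 1 ≤ rd A v)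

/-- Adjacency in the underlying graph of a diagram. -/
def adj (A : Arcs) (u v : ℕ) : Prop := (u, v) ∈ A ∨ (v, u) ∈ A

/-- `v` lies in the primary component (connected component of vertex 1). -/
def inPrimary (A : Arcs) (v : ℕ) : Prop := Relation.ReflTransGen (adj A) 1 v

/-- The underlying graph on vertex set `[n]` is connected. -/
def ConnectedOn (n : ℕ) (A : Arcs) : Prop :=
  ∀ u v, 1 ≤ u → u ≤ n → 1 ≤ v → v ≤ n → Relation.ReflTransGen (adj A) u v

/-- Number of stacks on `[n]`. -/
noncomputable def stackCount (n : ℕ) : ℕ := Nat.card {A : Arcs // IsStack n A}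

/-- Number of zigzag stacks on `[n]`. -/
noncomputable def zigzagCount (n : ℕ) : ℕ := Nat.card {A : Arcs // IsZigzag n A}

/-- Number of connected zigzag stacks on `[n]`. -/
noncomputable def connZigzagCount (n : ℕ) : ℕ :=
  Nat.card {A : Arcs // IsZigzag n A ∧ ConnectedOn n A}

/-- The ordinary generating function of the numbers of zigzag stacks. -/
noncomputable def Zgf : PowerSeries ℚ := PowerSeries.mk fun n => (zigzagCount n : ℚ)

/-- The power series variable over ℚ. -/
noncomputable def Xq : PowerSeries ℚ := PowerSeries.X

/-- An `m`-reduced zigzag stack on `[n]`: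
(1) `ld(i) + rd(i+m−1) ≤ 2` for `1 ≤ i ≤ n−m+1` (written additively);
(2) if `1 ≤ i < j ≤ n` with `ld(i) > 0` and `rd(j) > 0` then `j − i ≥ m−1`. -/
def MRed (m n : ℕ) (A : Arcs) : Prop :=
  IsZigzag n A ∧
  (∀ i, 1 ≤ i → i + m ≤ n + 1 → ld A i + rd A (i + m - 1) ≤ 2) ∧
  (∀ i j, 1 ≤ i → i < j → j ≤ n → 0 < ld A i → 0 < rd A j → i + m ≤ j + 1)

/-- An `m`-regular linear stack on `[n]`: every arc has length ≥ m and every vertex has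
degree ≤ 2. -/
def RegLinear (m n : ℕ) (A : Arcs) : Prop :=
  IsStack n A ∧ (∀ p ∈ A, p.1 + m ≤ p.2) ∧ ∀ v, deg A v ≤ 2

/-- Number of `m`-reduced zigzag stacks on `[n]`. -/
noncomputable def zm (m n : ℕ) : ℕ := Nat.card {A : Arcs // MRed m n A}

/-- Number of `m`-regular linear stacks on `[n]`. -/
noncomputable def rmc (m n : ℕ) : ℕ := Nat.card {A : Arcs // RegLinear m n A}

/-- Generating function of `m`-reduced zigzag stacks. -/
noncomputable def Zm (m : ℕ) : PowerSeries ℚ := PowerSeries.mk fun n => (zm m n : ℚ)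

/-- Generating function of `m`-regular linear stacks. -/
noncomputable def Rm (m : ℕ) : PowerSeries ℚ := PowerSeries.mk fun n => (rmc m n : ℚ)

/-- Extended left-degree function used to define boundary types. -/
def extLD (A : Arcs) (l a v : ℕ) : ℕ :=
  if v = 0 then a else if v = l + 1 then 0 else ld A v

/-- Extended right-degree function used to define boundary types. -/
def extRD (A : Arcs) (l b v : ℕ) : ℕ :=
  if v = 0 then 0 else if v = l + 1 then b else rd A v

/-- An `m`-reduced zigzag stack on `[l]` of boundary type `(a,b)`. -/
def BoundaryType (m a b l : ℕ) (A : Arcs) : Prop :=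
  MRed m l A ∧
  (∀ i, i + m ≤ l + 2 → extLD A l a i + extRD A l b (i + m - 1) ≤ 2) ∧
  (∀ i j, i < j → j ≤ l + 1 → 0 < extLD A l a i → 0 < extRD A l b j → i + m ≤ j + 1)

/-- Number of boundary-type-`(a,b)` structures on `[n]`. -/
noncomputable def tc (m a b n : ℕ) : ℕ := Nat.card {A : Arcs // BoundaryType m a b n A}

/-- Generating functions `T_i(x)`; types T₁,…,T₆ correspond to `(a,b)` =
(0,0), (1,0), (1,1), (2,0), (2,1), (2,2). -/
noncomputable def Tgf (m a b : ℕ) : PowerSeries ℚ := PowerSeries.mk fun n => (tc m a b n : ℚ)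

/-- Type G : `m`-reduced zigzag stack with `deg(1) ≤ 1`. -/
def TypeG (m n : ℕ) (A : Arcs) : Prop := MRed m n A ∧ deg A 1 ≤ 1

/-- Type H : `m`-reduced zigzag stack with `deg(1) ≤ 1` and `deg(n) ≤ 1`. -/
def TypeH (m n : ℕ) (A : Arcs) : Prop := MRed m n A ∧ deg A 1 ≤ 1 ∧ deg A n ≤ 1

noncomputable def gcnt (m n : ℕ) : ℕ := Nat.card {A : Arcs // TypeG m n A}
noncomputable def hcnt (m n : ℕ) : ℕ := Nat.card {A : Arcs // TypeH m n A}

/-- Generating function `G(x)`. -/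
noncomputable def Ggf (m : ℕ) : PowerSeries ℚ := PowerSeries.mk fun n => (gcnt m n : ℚ)

/-- Generating function `H(x)`. -/
noncomputable def Hgf (m : ℕ) : PowerSeries ℚ := PowerSeries.mk fun n => (hcnt m n : ℚ)

/-- The reduction map θ_m: replace each arc `(i,j)` by `(i, j−m+1)`. -/
def theta (m : ℕ) (A : Arcs) : Arcs := A.image fun p => (p.1, p.2 - m + 1)

/-- Relabel a structure whose arcs lie in `{c+1, …}` down by `c`. -/
def shiftDown (c : ℕ) (A : Arcs) : Arcs := A.image fun p => (p.1 - c, p.2 - c)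

/-- Conditions (1) and (2) of `m`-reducedness restricted to a set `J` of vertices. -/
def CondOn (m : ℕ) (A : Arcs) (J : Finset ℕ) : Prop :=
  (∀ i, i ∈ J → i + m - 1 ∈ J → ld A i + rd A (i + m - 1) ≤ 2) ∧
  (∀ i j, i ∈ J → j ∈ J → i < j → 0 < ld A i → 0 < rd A j → i + m ≤ j + 1)

open Finset
open scoped Classical

noncomputable section

/-- all possible arcs on `[n]` -/
def pool (n : ℕ) : Finset (ℕ × ℕ) :=
  ((Finset.range (n+1)) ×ˢ (Finset.range (n+1))).filter fun p => 1 ≤ p.1 ∧ p.1 < p.2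

lemma mem_pool {n : ℕ} {p : ℕ × ℕ} : p ∈ pool n ↔ 1 ≤ p.1 ∧ p.1 < p.2 ∧ p.2 ≤ n := by
  cases p with
  | mk i j =>
    simp only [pool, Finset.mem_filter, Finset.mem_product, Finset.mem_range]
    constructor
    · rintro ⟨⟨h1, h2⟩, h3, h4⟩; exact ⟨h3, h4, by omega⟩
    · rintro ⟨h1, h2, h3⟩; exact ⟨⟨by omega, by omega⟩, h1, h2⟩

def NC (A : Arcs) : Prop := ∀ p ∈ A, ∀ q ∈ A, ¬ Crossing p q

def Tall (A : Arcs) : Prop := ∀ p ∈ A, p.1 + 2 ≤ p.2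

def stacksF (n : ℕ) : Finset Arcs := (pool n).powerset.filter fun A => NC A

def tallF (n : ℕ) : Finset Arcs := (pool n).powerset.filter fun A => NC A ∧ Tall A

def tallNoF (n : ℕ) : Finset Arcs := (tallF n).filter fun A => (1, n) ∉ A

lemma mem_stacksF {n : ℕ} {A : Arcs} : A ∈ stacksF n ↔ IsStack n A := by
  rw [stacksF, Finset.mem_filter, Finset.mem_powerset]
  unfold IsStack IsDiagram NC
  constructor
  · rintro ⟨h1, h2⟩; exact ⟨fun p hp => mem_pool.mp (h1 hp), h2⟩
  · rintro ⟨h1, h2⟩; exact ⟨fun p hp => mem_pool.mpr (h1 p hp), h2⟩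

lemma mem_tallF {n : ℕ} {A : Arcs} : A ∈ tallF n ↔ A ⊆ pool n ∧ NC A ∧ Tall A := by
  simp [tallF]

lemma mem_tallNoF {n : ℕ} {A : Arcs} :
    A ∈ tallNoF n ↔ (A ⊆ pool n ∧ NC A ∧ Tall A) ∧ (1, n) ∉ A := by
  simp [tallNoF, mem_tallF]

lemma stackCount_eq (n : ℕ) : stackCount n = (stacksF n).card := by
  rw [← Nat.card_eq_finsetCard]
  exact Nat.card_congr (Equiv.subtypeEquivRight fun A => mem_stacksF.symm)

lemma crossing_tall {p q : ℕ × ℕ} (hp : p.1 < p.2) (hq : q.1 < q.2) (h : Crossing p q) :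
    p.1 + 2 ≤ p.2 ∧ q.1 + 2 ≤ q.2 := by
  obtain ⟨h1, h2, h3⟩ := h; omega

/-! ### Step 1: units factor out -/

def unitsF (n : ℕ) : Finset (ℕ × ℕ) := (pool n).filter fun p => p.2 = p.1 + 1

lemma card_unitsF (n : ℕ) : (unitsF n).card = n - 1 := by
  have : unitsF n = (Finset.Icc 1 (n-1)).image fun i => (i, i+1) := by
    ext p
    simp only [unitsF, Finset.mem_filter, mem_pool, Finset.mem_image, Finset.mem_Icc]
    constructor
    · rintro ⟨⟨h1, h2, h3⟩, h4⟩
      exact ⟨p.1, ⟨h1, by omega⟩, by rw [← h4]⟩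
    · rintro ⟨i, ⟨hi1, hi2⟩, rfl⟩
      refine ⟨⟨hi1, by omega, by omega⟩, rfl⟩
  rw [this, Finset.card_image_of_injective _ (fun a b h => by simpa using (Prod.mk.injEq _ _ _ _ ▸ h).1),
    Nat.card_Icc]
  omega

lemma card_stacksF_eq (n : ℕ) : (stacksF n).card = 2 ^ (n - 1) * (tallF n).card := by
  have key : (stacksF n).card = ((unitsF n).powerset ×ˢ tallF n).card := by
    apply Finset.card_nbij'
      (i := fun A => (A.filter fun p => p.2 = p.1 + 1, A.filter fun p => ¬ p.2 = p.1 + 1))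
      (j := fun q => q.1 ∪ q.2)
    · intro A hA
      rw [Finset.mem_coe, mem_stacksF] at hA
      obtain ⟨hdiag, hnc⟩ := hA
      rw [Finset.mem_coe, Finset.mem_product]
      constructor
      · rw [Finset.mem_powerset]
        intro p hp
        rw [Finset.mem_filter] at hp
        exact Finset.mem_filter.mpr ⟨mem_pool.mpr (hdiag p hp.1), hp.2⟩
      · rw [mem_tallF]
        refine ⟨?_, ?_, ?_⟩
        · intro p hp; rw [Finset.mem_filter] at hp; exact mem_pool.mpr (hdiag p hp.1)
        · intro p hp q hq
          rw [Finset.mem_filter] at hp hq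
          exact hnc p hp.1 q hq.1
        · intro p hp
          rw [Finset.mem_filter] at hp
          have := (hdiag p hp.1).2.1
          omega
    · rintro ⟨u, t⟩ hq
      rw [Finset.mem_coe, Finset.mem_product, Finset.mem_powerset, mem_tallF] at hq
      obtain ⟨hu, ht, hnc, htall⟩ := hq
      rw [Finset.mem_coe, mem_stacksF]
      constructor
      · intro p hp
        rcases Finset.mem_union.mp hp with h | h
        · exact mem_pool.mp ((Finset.mem_filter.mp (hu h)).1)
        · exact mem_pool.mp (ht h)
      · intro p hp q hq hc
        have hp' : p.1 < p.2 := by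
          rcases Finset.mem_union.mp hp with h | h
          · exact (mem_pool.mp (Finset.mem_filter.mp (hu h)).1).2.1
          · exact (mem_pool.mp (ht h)).2.1
        have hq' : q.1 < q.2 := by
          rcases Finset.mem_union.mp hq with h | h
          · exact (mem_pool.mp (Finset.mem_filter.mp (hu h)).1).2.1
          · exact (mem_pool.mp (ht h)).2.1
        obtain ⟨cp, cq⟩ := crossing_tall hp' hq' hc
        have hpt : p ∈ t := by
          rcases Finset.mem_union.mp hp with h | h
          · have := (Finset.mem_filter.mp (hu h)).2; omega
          · exact h
        have hqt : q ∈ t := by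
          rcases Finset.mem_union.mp hq with h | h
          · have := (Finset.mem_filter.mp (hu h)).2; omega
          · exact h
        exact hnc p hpt q hqt hc
    · intro A hA
      exact Finset.filter_union_filter_not_eq _ A
    · rintro ⟨u, t⟩ hq
      rw [Finset.mem_coe, Finset.mem_product, Finset.mem_powerset, mem_tallF] at hq
      obtain ⟨hu, ht, hnc, htall⟩ := hq
      have h1 : ∀ p ∈ u, p.2 = p.1 + 1 := fun p hp => (Finset.mem_filter.mp (hu hp)).2
      have h2 : ∀ p ∈ t, ¬ p.2 = p.1 + 1 := by
        intro p hp
        have := htall p hp; omega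
      rw [Prod.mk.injEq]
      constructor
      · rw [Finset.filter_union, Finset.filter_true_of_mem h1,
          Finset.filter_false_of_mem (fun p hp => by simp [h2 p hp]), Finset.union_empty]
      · rw [Finset.filter_union, Finset.filter_false_of_mem (fun p hp => by simp [h1 p hp]),
          Finset.filter_true_of_mem h2, Finset.empty_union]
  rw [key, Finset.card_product, Finset.card_powerset, card_unitsF]

/-! ### Step 2: toggle the full arc -/

lemma not_crossing_full {n : ℕ} {q : ℕ × ℕ} (hq : q ∈ pool n) :
    ¬ Crossing (1, n) q ∧ ¬ Crossing q (1, n) := by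
  obtain ⟨h1, h2, h3⟩ := mem_pool.mp hq
  constructor
  · rintro ⟨c1, c2, c3⟩; simp at c1 c2 c3; omega
  · rintro ⟨c1, c2, c3⟩; simp at c1 c2 c3; omega

lemma card_tallF_toggle {n : ℕ} (hn : 3 ≤ n) : (tallF n).card = 2 * (tallNoF n).card := by
  have hsplit := Finset.card_filter_add_card_filter_not
    (s := tallF n) (p := fun A => (1, n) ∈ A)
  have heq : ((tallF n).filter fun A => (1, n) ∈ A).card
      = ((tallF n).filter fun A => ¬ (1, n) ∈ A).card := by
    apply Finset.card_nbij' (i := fun A => A.erase (1, n)) (j := fun A => insert (1, n) A)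
    · intro A hA
      rw [Finset.mem_coe, Finset.mem_filter, mem_tallF] at hA ⊢
      obtain ⟨⟨hsub, hnc, ht⟩, hmem⟩ := hA
      refine ⟨⟨fun p hp => hsub (Finset.mem_of_mem_erase hp),
        fun p hp q hq => hnc p (Finset.mem_of_mem_erase hp) q (Finset.mem_of_mem_erase hq),
        fun p hp => ht p (Finset.mem_of_mem_erase hp)⟩, by simp⟩
    · intro A hA
      rw [Finset.mem_coe, Finset.mem_filter, mem_tallF] at hA ⊢
      obtain ⟨⟨hsub, hnc, ht⟩, hmem⟩ := hA
      have hfull : (1, n) ∈ pool n := mem_pool.mpr ⟨le_refl 1, by omega, le_refl n⟩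
      refine ⟨⟨?_, ?_, ?_⟩, by simp⟩
      · intro p hp
        rcases Finset.mem_insert.mp hp with rfl | h
        · exact hfull
        · exact hsub h
      · intro p hp q hq
        rcases Finset.mem_insert.mp hp with rfl | hp' <;>
          rcases Finset.mem_insert.mp hq with rfl | hq'
        · rintro ⟨c1, _, _⟩; exact absurd c1 (lt_irrefl _)
        · exact (not_crossing_full (hsub hq')).1
        · exact (not_crossing_full (hsub hp')).2
        · exact hnc p hp' q hq'
      · intro p hp
        rcases Finset.mem_insert.mp hp with rfl | h
        · simpa using hn
        · exact ht p h
    · intro A hA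
      rw [Finset.mem_coe, Finset.mem_filter] at hA
      exact Finset.insert_erase hA.2
    · intro A hA
      rw [Finset.mem_coe, Finset.mem_filter] at hA
      exact Finset.erase_insert hA.2
  have : (tallNoF n).card = ((tallF n).filter fun A => ¬ (1, n) ∈ A).card := rfl
  omega

/-! ### base cases -/

lemma tallF_one : (tallF 1).card = 1 := by
  have : tallF 1 = {∅} := by
    ext A
    rw [mem_tallF]
    simp only [Finset.mem_singleton]
    constructor
    · rintro ⟨hsub, -, -⟩
      rw [Finset.eq_empty_iff_forall_notMem]
      intro p hp
      have := mem_pool.mp (hsub hp); omega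
    · rintro rfl
      exact ⟨by simp, fun p hp => absurd hp (Finset.notMem_empty p),
        fun p hp => absurd hp (Finset.notMem_empty p)⟩
  rw [this, Finset.card_singleton]

lemma tallF_two : (tallF 2).card = 1 := by
  have : tallF 2 = {∅} := by
    ext A
    rw [mem_tallF]
    simp only [Finset.mem_singleton]
    constructor
    · rintro ⟨hsub, -, ht⟩
      rw [Finset.eq_empty_iff_forall_notMem]
      intro p hp
      have h1 := mem_pool.mp (hsub hp)
      have h2 := ht p hp
      omega
    · rintro rfl
      exact ⟨by simp, fun p hp => absurd hp (Finset.notMem_empty p),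
        fun p hp => absurd hp (Finset.notMem_empty p)⟩
  rw [this, Finset.card_singleton]

/-! ### Step 3: the main recurrence -/

def shiftUp (c : ℕ) (A : Arcs) : Arcs := A.image fun p => (p.1 + c, p.2 + c)

lemma mem_shiftDown {c : ℕ} {A : Arcs} {q : ℕ × ℕ} :
    q ∈ shiftDown c A ↔ ∃ p ∈ A, (p.1 - c, p.2 - c) = q := by
  simp [shiftDown]

lemma mem_shiftUp {c : ℕ} {A : Arcs} {q : ℕ × ℕ} :
    q ∈ shiftUp c A ↔ ∃ p ∈ A, (p.1 + c, p.2 + c) = q := by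
  simp [shiftUp]

lemma shiftDown_shiftUp (c : ℕ) (A : Arcs) : shiftDown c (shiftUp c A) = A := by
  rw [shiftUp, shiftDown, Finset.image_image]
  have : ((fun p : ℕ × ℕ => (p.1 - c, p.2 - c)) ∘ fun p : ℕ × ℕ => (p.1 + c, p.2 + c)) = id := by
    funext p; simp
  rw [this, Finset.image_id]

lemma shiftUp_shiftDown {c : ℕ} {A : Arcs} (hb : ∀ p ∈ A, c ≤ p.1 ∧ c ≤ p.2) :
    shiftUp c (shiftDown c A) = A := by
  rw [shiftDown, shiftUp, Finset.image_image]
  rw [Finset.image_congr (g := id), Finset.image_id]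
  intro p hp
  obtain ⟨h1, h2⟩ := hb p hp
  simp only [Function.comp_apply, id_eq]
  rw [Prod.mk.injEq]
  omega

/-- the classifying statistic: largest right endpoint of an arc at vertex 1 (0 if none) -/
def fA (A : Arcs) : ℕ := (A.filter fun p => p.1 = 1).sup Prod.snd

lemma fA_le {A : Arcs} {p : ℕ × ℕ} (hp : p ∈ A) (h1 : p.1 = 1) : p.2 ≤ fA A :=
  Finset.le_sup (f := Prod.snd) (Finset.mem_filter.mpr ⟨hp, h1⟩)

lemma fA_arc {A : Arcs} (h : fA A ≠ 0) : (1, fA A) ∈ A := by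
  have hne : (A.filter fun p => p.1 = 1).Nonempty := by
    by_contra hc
    rw [Finset.not_nonempty_iff_eq_empty] at hc
    rw [fA, hc] at h
    simp at h
  obtain ⟨p, hp, hsup⟩ := Finset.exists_mem_eq_sup _ hne Prod.snd
  rw [Finset.mem_filter] at hp
  have : p = (1, fA A) := by
    rw [Prod.ext_iff]
    exact ⟨hp.2, hsup.symm⟩
  rw [← this]; exact hp.1

lemma fA_eq_zero {A : Arcs} (h : ∀ p ∈ A, p.1 ≠ 1) : fA A = 0 := by
  rw [fA, Finset.filter_false_of_mem (fun p hp => h p hp), Finset.sup_empty]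
  rfl

lemma fA_mem {n : ℕ} {A : Arcs} (hA : A ∈ tallF n) :
    fA A = 0 ∨ (3 ≤ fA A ∧ fA A ≤ n) := by
  rw [mem_tallF] at hA
  obtain ⟨hsub, hnc, ht⟩ := hA
  by_cases h : fA A = 0
  · exact Or.inl h
  · right
    have harc := fA_arc h
    have h1 := mem_pool.mp (hsub harc)
    have h2 := ht _ harc
    simp at h1 h2
    omega

/-- fiber 0: vertex 1 isolated -/
lemma fiber0 (n : ℕ) :
    ((tallF (n+1)).filter fun A => fA A = 0).card = (tallF n).card := by
  apply Finset.card_nbij' (i := fun A => shiftDown 1 A) (j := fun A => shiftUp 1 A)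
  · intro A hA
    rw [Finset.mem_coe, Finset.mem_filter, mem_tallF] at hA
    obtain ⟨⟨hsub, hnc, ht⟩, hf⟩ := hA
    have hb : ∀ p ∈ A, 2 ≤ p.1 ∧ p.1 + 2 ≤ p.2 ∧ p.2 ≤ n + 1 := by
      intro p hp
      have h1 := mem_pool.mp (hsub hp)
      have h2 := ht p hp
      have h3 : p.1 ≠ 1 := by
        intro hc
        have := fA_le hp hc
        rw [hf] at this
        omega
      omega
    rw [Finset.mem_coe, mem_tallF]
    refine ⟨?_, ?_, ?_⟩
    · intro q hq
      obtain ⟨p, hp, rfl⟩ := mem_shiftDown.mp hq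
      have := hb p hp
      exact mem_pool.mpr ⟨by omega, by omega, by omega⟩
    · intro q1 hq1 q2 hq2 hc
      obtain ⟨p1, hp1, rfl⟩ := mem_shiftDown.mp hq1
      obtain ⟨p2, hp2, rfl⟩ := mem_shiftDown.mp hq2
      have b1 := hb p1 hp1
      have b2 := hb p2 hp2
      obtain ⟨c1, c2, c3⟩ := hc
      simp only at c1 c2 c3
      exact hnc p1 hp1 p2 hp2 ⟨by omega, by omega, by omega⟩
    · intro q hq
      obtain ⟨p, hp, rfl⟩ := mem_shiftDown.mp hq
      have := hb p hp
      simp only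
      omega
  · intro A hA
    rw [Finset.mem_coe, mem_tallF] at hA
    obtain ⟨hsub, hnc, ht⟩ := hA
    have hb : ∀ p ∈ A, 1 ≤ p.1 ∧ p.1 + 2 ≤ p.2 ∧ p.2 ≤ n := by
      intro p hp
      have h1 := mem_pool.mp (hsub hp)
      have h2 := ht p hp
      omega
    rw [Finset.mem_coe, Finset.mem_filter, mem_tallF]
    refine ⟨⟨?_, ?_, ?_⟩, ?_⟩
    · intro q hq
      obtain ⟨p, hp, rfl⟩ := mem_shiftUp.mp hq
      have := hb p hp
      exact mem_pool.mpr ⟨by omega, by omega, by omega⟩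
    · intro q1 hq1 q2 hq2 hc
      obtain ⟨p1, hp1, rfl⟩ := mem_shiftUp.mp hq1
      obtain ⟨p2, hp2, rfl⟩ := mem_shiftUp.mp hq2
      obtain ⟨c1, c2, c3⟩ := hc
      simp only at c1 c2 c3
      exact hnc p1 hp1 p2 hp2 ⟨by omega, by omega, by omega⟩
    · intro q hq
      obtain ⟨p, hp, rfl⟩ := mem_shiftUp.mp hq
      have := hb p hp
      simp only
      omega
    · apply fA_eq_zero
      intro q hq
      obtain ⟨p, hp, rfl⟩ := mem_shiftUp.mp hq
      have := hb p hp
      simp only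
      omega
  · intro A hA
    rw [Finset.mem_coe, Finset.mem_filter, mem_tallF] at hA
    obtain ⟨⟨hsub, hnc, ht⟩, hf⟩ := hA
    apply shiftUp_shiftDown
    intro p hp
    have h1 := mem_pool.mp (hsub hp)
    have h3 : p.1 ≠ 1 := by
      intro hc
      have := fA_le hp hc
      rw [hf] at this
      have := ht p hp
      omega
    omega
  · intro A hA
    exact shiftDown_shiftUp 1 A

/-- fiber j: decompose at the maximal arc from vertex 1 -/
lemma fiberj (n j : ℕ) (hj3 : 3 ≤ j) (hjn : j ≤ n + 1) :
    ((tallF (n+1)).filter fun A => fA A = j).card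
      = ((tallNoF j) ×ˢ (tallF (n+2-j))).card := by
  apply Finset.card_nbij'
    (i := fun A => ((A.filter fun p => p.2 ≤ j).erase (1, j),
      shiftDown (j-1) (A.filter fun p => j ≤ p.1)))
    (j := fun B => insert (1, j) (B.1 ∪ shiftUp (j-1) B.2))
  · -- forward membership
    intro A hA
    rw [Finset.mem_coe, Finset.mem_filter, mem_tallF] at hA
    obtain ⟨⟨hsub, hnc, ht⟩, hf⟩ := hA
    have harc : (1, j) ∈ A := by
      have := fA_arc (A := A) (by omega : fA A ≠ 0)
      rwa [hf] at this
    have hle : ∀ p ∈ A, p.1 = 1 → p.2 ≤ j := by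
      intro p hp h1
      have := fA_le hp h1
      omega
    rw [Finset.mem_coe, Finset.mem_product]
    constructor
    · rw [mem_tallNoF]
      refine ⟨⟨?_, ?_, ?_⟩, Finset.notMem_erase _ _⟩
      · intro p hp
        rw [Finset.mem_erase, Finset.mem_filter] at hp
        have h1 := mem_pool.mp (hsub hp.2.1)
        exact mem_pool.mpr ⟨h1.1, h1.2.1, hp.2.2⟩
      · intro p hp q hq
        rw [Finset.mem_erase, Finset.mem_filter] at hp hq
        exact hnc p hp.2.1 q hq.2.1
      · intro p hp
        rw [Finset.mem_erase, Finset.mem_filter] at hp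
        exact ht p hp.2.1
    · rw [mem_tallF]
      have hb : ∀ p ∈ A, j ≤ p.1 → j ≤ p.1 ∧ p.1 + 2 ≤ p.2 ∧ p.2 ≤ n + 1 := by
        intro p hp hjp
        have h1 := mem_pool.mp (hsub hp)
        have h2 := ht p hp
        omega
      refine ⟨?_, ?_, ?_⟩
      · intro q hq
        obtain ⟨p, hp, rfl⟩ := mem_shiftDown.mp hq
        rw [Finset.mem_filter] at hp
        have := hb p hp.1 hp.2
        exact mem_pool.mpr ⟨by omega, by omega, by omega⟩
      · intro q1 hq1 q2 hq2 hc
        obtain ⟨p1, hp1, rfl⟩ := mem_shiftDown.mp hq1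
        obtain ⟨p2, hp2, rfl⟩ := mem_shiftDown.mp hq2
        rw [Finset.mem_filter] at hp1 hp2
        have b1 := hb p1 hp1.1 hp1.2
        have b2 := hb p2 hp2.1 hp2.2
        obtain ⟨c1, c2, c3⟩ := hc
        simp only at c1 c2 c3
        exact hnc p1 hp1.1 p2 hp2.1 ⟨by omega, by omega, by omega⟩
      · intro q hq
        obtain ⟨p, hp, rfl⟩ := mem_shiftDown.mp hq
        rw [Finset.mem_filter] at hp
        have := hb p hp.1 hp.2
        simp only
        omega
  · -- backward membership
    rintro ⟨B, C⟩ hBC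
    rw [Finset.mem_coe, Finset.mem_product, mem_tallNoF, mem_tallF] at hBC
    obtain ⟨⟨⟨hBsub, hBnc, hBt⟩, hBno⟩, hCsub, hCnc, hCt⟩ := hBC
    have hB : ∀ p ∈ B, 1 ≤ p.1 ∧ p.1 + 2 ≤ p.2 ∧ p.2 ≤ j := by
      intro p hp
      have h1 := mem_pool.mp (hBsub hp)
      have h2 := hBt p hp
      omega
    have hC' : ∀ q ∈ shiftUp (j-1) C, j ≤ q.1 ∧ q.1 + 2 ≤ q.2 ∧ q.2 ≤ n + 1 := by
      intro q hq
      obtain ⟨p, hp, rfl⟩ := mem_shiftUp.mp hq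
      have h1 := mem_pool.mp (hCsub hp)
      have h2 := hCt p hp
      simp only
      omega
    rw [Finset.mem_coe, Finset.mem_filter, mem_tallF]
    have hbnd : ∀ p ∈ insert (1, j) (B ∪ shiftUp (j-1) C),
        1 ≤ p.1 ∧ p.1 + 2 ≤ p.2 ∧ p.2 ≤ n + 1 := by
      intro p hp
      rcases Finset.mem_insert.mp hp with rfl | hp'
      · simp only; omega
      · rcases Finset.mem_union.mp hp' with h | h
        · have := hB p h; omega
        · have := hC' p h; omega
    refine ⟨⟨?_, ?_, ?_⟩, ?_⟩
    · intro p hp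
      have := hbnd p hp
      exact mem_pool.mpr ⟨by omega, by omega, by omega⟩
    · intro p hp q hq hc
      obtain ⟨c1, c2, c3⟩ := hc
      rcases Finset.mem_insert.mp hp with rfl | hp' <;>
        rcases Finset.mem_insert.mp hq with rfl | hq'
      · omega
      · rcases Finset.mem_union.mp hq' with h | h
        · have := hB q h; simp only at c1 c2 c3; omega
        · have := hC' q h; simp only at c1 c2 c3; omega
      · have := hbnd p (Finset.mem_insert_of_mem hp'); simp only at c1 c2 c3; omega
      · rcases Finset.mem_union.mp hp' with h | h <;> rcases Finset.mem_union.mp hq' with h' | h'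
        · exact hBnc p h q h' ⟨c1, c2, c3⟩
        · have b1 := hB p h; have b2 := hC' q h'; omega
        · have b1 := hC' p h; have b2 := hB q h'; omega
        · obtain ⟨p1, hp1, rfl⟩ := mem_shiftUp.mp h
          obtain ⟨p2, hp2, rfl⟩ := mem_shiftUp.mp h'
          simp only at c1 c2 c3
          exact hCnc p1 hp1 p2 hp2 ⟨by omega, by omega, by omega⟩
    · intro p hp
      have := hbnd p hp
      omega
    · -- fA = j
      show fA (insert (1, j) (B ∪ shiftUp (j-1) C)) = j
      have h2 : j ≤ fA (insert (1, j) (B ∪ shiftUp (j-1) C)) :=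
        fA_le (p := (1, j)) (Finset.mem_insert_self _ _) rfl
      have h1 : fA (insert (1, j) (B ∪ shiftUp (j-1) C)) ≤ j := by
        apply Finset.sup_le
        intro p hp
        rw [Finset.mem_filter] at hp
        obtain ⟨hp, hp1⟩ := hp
        rcases Finset.mem_insert.mp hp with rfl | hp'
        · exact le_refl j
        · rcases Finset.mem_union.mp hp' with h | h
          · exact (hB p h).2.2
          · have := hC' p h; omega
      omega
  · -- left inverse
    intro A hA
    rw [Finset.mem_coe, Finset.mem_filter, mem_tallF] at hA
    obtain ⟨⟨hsub, hnc, ht⟩, hf⟩ := hA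
    have harc : (1, j) ∈ A := by
      have := fA_arc (A := A) (by omega : fA A ≠ 0)
      rwa [hf] at this
    have hle : ∀ p ∈ A, p.1 = 1 → p.2 ≤ j := by
      intro p hp h1
      have := fA_le hp h1
      omega
    have hsplit : ∀ p ∈ A, p ≠ (1, j) → p.2 ≤ j ∨ j ≤ p.1 := by
      intro p hp hne
      by_contra hcon
      push_neg at hcon
      obtain ⟨hc1, hc2⟩ := hcon
      have hp1 := mem_pool.mp (hsub hp)
      rcases Nat.eq_or_lt_of_le hp1.1 with h1 | h1
      · exact absurd (hle p hp h1.symm) (by omega)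
      · exact hnc (1, j) harc p hp ⟨by simpa using h1, by simpa, by simpa using hc1⟩
    have hR : shiftUp (j-1) (shiftDown (j-1) (A.filter fun p => j ≤ p.1))
        = A.filter fun p => j ≤ p.1 := by
      apply shiftUp_shiftDown
      intro p hp
      rw [Finset.mem_filter] at hp
      have := mem_pool.mp (hsub hp.1)
      omega
    dsimp only; rw [hR]
    ext p
    simp only [Finset.mem_insert, Finset.mem_union, Finset.mem_erase, Finset.mem_filter]
    constructor
    · rintro (rfl | ⟨hne, hp, hle'⟩ | ⟨hp, hge⟩)
      · exact harc
      · exact hp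
      · exact hp
    · intro hp
      by_cases hne : p = (1, j)
      · exact Or.inl hne
      · rcases hsplit p hp hne with h | h
        · exact Or.inr (Or.inl ⟨hne, hp, h⟩)
        · exact Or.inr (Or.inr ⟨hp, h⟩)
  · -- right inverse
    rintro ⟨B, C⟩ hBC
    rw [Finset.mem_coe, Finset.mem_product, mem_tallNoF, mem_tallF] at hBC
    obtain ⟨⟨⟨hBsub, hBnc, hBt⟩, hBno⟩, hCsub, hCnc, hCt⟩ := hBC
    have hB : ∀ p ∈ B, 1 ≤ p.1 ∧ p.1 + 2 ≤ p.2 ∧ p.2 ≤ j := by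
      intro p hp
      have h1 := mem_pool.mp (hBsub hp)
      have h2 := hBt p hp
      omega
    have hC' : ∀ q ∈ shiftUp (j-1) C, j ≤ q.1 ∧ q.1 + 2 ≤ q.2 ∧ j + 1 ≤ q.2 := by
      intro q hq
      obtain ⟨p, hp, rfl⟩ := mem_shiftUp.mp hq
      have h1 := mem_pool.mp (hCsub hp)
      have h2 := hCt p hp
      simp only
      omega
    rw [Prod.mk.injEq]
    constructor
    · ext p
      simp only [Finset.mem_erase, Finset.mem_filter, Finset.mem_insert, Finset.mem_union]
      constructor
      · rintro ⟨hne, (rfl | hp | hp), hle'⟩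
        · exact absurd rfl hne
        · exact hp
        · have := hC' p hp; omega
      · intro hp
        have hb := hB p hp
        refine ⟨?_, Or.inr (Or.inl hp), hb.2.2⟩
        intro hc
        rw [hc] at hp
        exact hBno hp
    · have hfilter : (insert (1, j) (B ∪ shiftUp (j-1) C)).filter (fun p => j ≤ p.1)
          = shiftUp (j-1) C := by
        ext p
        simp only [Finset.mem_filter, Finset.mem_insert, Finset.mem_union]
        constructor
        · rintro ⟨rfl | hp | hp, hge⟩
          · simp at hge; omega
          · have := hB p hp; omega
          · exact hp
        · intro hp
          exact ⟨Or.inr (Or.inr hp), (hC' p hp).1⟩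
      rw [hfilter, shiftDown_shiftUp]

lemma card_tallF_rec (n : ℕ) :
    (tallF (n+1)).card = (tallF n).card
      + ∑ j ∈ Finset.Icc 3 (n+1), (tallNoF j).card * (tallF (n+2-j)).card := by
  have hmap : ∀ A ∈ tallF (n+1), fA A ∈ insert 0 (Finset.Icc 3 (n+1)) := by
    intro A hA
    rcases fA_mem hA with h | h
    · simp [h]
    · simp only [Finset.mem_insert, Finset.mem_Icc]
      right; exact h
  rw [Finset.card_eq_sum_card_fiberwise hmap, Finset.sum_insert (by simp)]
  congr 1
  · exact fiber0 n
  · apply Finset.sum_congr rfl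
    intro j hj
    rw [Finset.mem_Icc] at hj
    rw [fiberj n j hj.1 hj.2, Finset.card_product]

lemma card_tallF_rec' (m : ℕ) :
    (tallF (m+3)).card = 2 * (tallF (m+2)).card
      + ∑ j ∈ Finset.Icc 3 (m+2), (tallF j).card * (tallF (m+4-j)).card := by
  have h1 := card_tallF_rec (m+2)
  rw [Finset.sum_Icc_succ_top (by omega : 3 ≤ m + 3)] at h1
  have h2 : m + 2 + 2 - (m + 3) = 1 := by omega
  rw [h2, tallF_one, mul_one] at h1
  have h3 := card_tallF_toggle (n := m + 3) (by omega)
  have e0 : m + 2 + 1 = m + 3 := by omega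
  rw [e0] at h1
  have h4 : ∀ j ∈ Finset.Icc 3 (m+2),
      (tallF j).card * (tallF (m+4-j)).card
        = 2 * ((tallNoF j).card * (tallF (m+2+2-j)).card) := by
    intro j hj
    rw [Finset.mem_Icc] at hj
    have := card_tallF_toggle (n := j) hj.1
    have he : m + 4 - j = m + 2 + 2 - j := by omega
    rw [he, this]
    ring
  rw [Finset.sum_congr rfl h4, ← Finset.mul_sum]
  omega

lemma main_count (a : ℕ → ℚ) (h0 : a 0 = 1)
    (hrec : ∀ m, a (m+1) = a m + ∑ k ∈ Finset.range (m+1), a k * a (m-k)) :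
    ∀ m, ((tallF (m+2)).card : ℚ) = a m := by
  intro m
  induction m using Nat.strong_induction_on with
  | _ m ih =>
    match m with
    | 0 => rw [tallF_two, h0]; norm_num
    | Nat.succ m =>
      have hr := card_tallF_rec' m
      have hcast : ((tallF (m+3)).card : ℚ)
          = 2 * ((tallF (m+2)).card : ℚ)
            + ∑ j ∈ Finset.Icc 3 (m+2), ((tallF j).card : ℚ) * ((tallF (m+4-j)).card : ℚ) := by
        rw [hr]; push_cast; ring
      have hIco : Finset.Icc 3 (m+2) = Finset.Ico 3 (m+3) := by
        rw [← Finset.Ico_add_one_right_eq_Icc]; rfl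
      rw [hIco, Finset.sum_Ico_eq_sum_range] at hcast
      have hm3 : m + 3 - 3 = m := by omega
      rw [hm3] at hcast
      have hsum : ∀ i ∈ Finset.range m,
          ((tallF (3+i)).card : ℚ) * ((tallF (m+4-(3+i))).card : ℚ)
            = a (i+1) * a (m - (i+1)) := by
        intro i hi
        rw [Finset.mem_range] at hi
        have e1 : 3 + i = (i+1) + 2 := by omega
        have e2 : m + 4 - (3+i) = (m - (i+1)) + 2 := by omega
        rw [e2, e1, ih (i+1) (by omega), ih (m - (i+1)) (by omega)]
      rw [Finset.sum_congr rfl hsum] at hcast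
      have := hrec m
      rw [Finset.sum_range_succ'] at this
      have hm : (m : ℕ) - 0 = m := by omega
      rw [hm, h0, one_mul] at this
      have e3 : m + 1 + 2 = m + 3 := by omega
      rw [e3, hcast, ih m (by omega), this]
      ring

end

/-- `s(n) = 2^{n−1}·a_{n−2}` for `n ≥ 2`, where the Schröder numbers `a`
are characterized by `(Σ a_k x^k)·2x = 1 − x − √(1−6x+x²)`, i.e. by the formal identity
`(1 − x − 2x·A(x))² = 1 − 6x + x²` (the square root with constant term 1 being unique). -/
theorem stack_count_schroeder (a : ℕ → ℚ)
    (ha : (1 - Xq - 2 * Xq * PowerSeries.mk a) ^ 2 = 1 - 6 * Xq + Xq ^ 2) :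
    ∀ n : ℕ, 2 ≤ n → (stackCount n : ℚ) = 2 ^ (n - 1) * a (n - 2) := by
  rw [show Xq = (X : ℚ⟦X⟧) from rfl] at ha
  have key : PowerSeries.mk a = 1 + X * PowerSeries.mk a + X * (PowerSeries.mk a)^2 := by
    have h4 : (4 : ℚ⟦X⟧) * X
        * (1 + X * PowerSeries.mk a + X * (PowerSeries.mk a)^2 - PowerSeries.mk a) = 0 := by
      linear_combination ha
    have hx : (4 : ℚ⟦X⟧) * X ≠ 0 :=
      mul_ne_zero (fun h => by simpa [map_ofNat] using congrArg constantCoeff h) X_ne_zero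
    rcases mul_eq_zero.mp h4 with h | h
    · exact absurd h hx
    · linear_combination -h
  have h0 : a 0 = 1 := by
    have := congrArg constantCoeff key
    simpa using this
  have hrec : ∀ m, a (m+1) = a m + ∑ k ∈ Finset.range (m+1), a k * a (m-k) := by
    intro m
    have := congrArg (coeff (m+1)) key
    rw [map_add, map_add, coeff_succ_X_mul, coeff_succ_X_mul] at this
    simp only [coeff_mk, coeff_one, Nat.succ_ne_zero, if_false] at this
    rw [pow_two, coeff_mul, Finset.Nat.sum_antidiagonal_eq_sum_range_succ_mk] at this
    simpa using this
  intro n hn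
  obtain ⟨m, rfl⟩ : ∃ m, n = m + 2 := ⟨n - 2, by omega⟩
  have hs : stackCount (m+2) = 2 ^ (m + 2 - 1) * (tallF (m+2)).card := by
    rw [stackCount_eq, card_stacksF_eq]
  rw [hs]
  push_cast
  rw [main_count a h0 hrec m]

end Paper
end

section
/- Let S be a zigzag stack on [n] and let C be its primary component. Then no arc of S connects two vertices lying in two different C-intervals; consequently every arc of S is either an arc of C or has both endpoints in the same C-interval, so S decomposes into its primary component together with a list of zigzag stacks, one on each C-interval. -/
open PowerSeries

namespace Paper

/-- no arc of a zigzag stack connects two vertices in different C-intervals: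
every arc either has both endpoints in the primary component, or has both endpoints outside
it with no vertex of the primary component strictly in between (i.e. both endpoints lie in
the same C-interval). -/
theorem primary_component_decomposition (n : ℕ) (A : Arcs) (hA : IsZigzag n A) :
    ∀ p ∈ A,
      (inPrimary A p.1 ∧ inPrimary A p.2) ∨
      (¬ inPrimary A p.1 ∧ ¬ inPrimary A p.2 ∧
        ∀ k, p.1 < k → k < p.2 → ¬ inPrimary A k) := by
  obtain ⟨⟨hdiag, hcross⟩, -, -⟩ := hA
  intro p hp
  obtain ⟨h1, h12, h2n⟩ := hdiag p hp
  have hp' : (p.1, p.2) ∈ A := by simpa using hp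
  have hadj : adj A p.1 p.2 := Or.inl hp'
  by_cases hpp : inPrimary A p.1
  · exact Or.inl ⟨hpp, hpp.tail hadj⟩
  · refine Or.inr ⟨hpp, fun h2 => hpp (h2.tail (Or.inr hp')), ?_⟩
    intro k hk1 hk2 hkP
    have key : ∀ v, Relation.ReflTransGen (adj A) 1 v →
        p.1 < v → v < p.2 → inPrimary A p.1 := by
      intro v hv
      induction hv with
      | refl => intro h _; omega
      | @tail b c hab hbc ih =>
        intro hc1 hc2
        rcases lt_trichotomy b p.1 with hb | hb | hb
        · -- b < p.1 : arc (b,c) crosses p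
          have hbcA : (b, c) ∈ A := by
            rcases hbc with h | h
            · exact h
            · exact absurd (hdiag _ h).2.1 (by simp; omega)
          exact absurd ⟨hb, hc1, hc2⟩ (hcross _ hbcA _ hp)
        · exact hb ▸ hab
        · rcases lt_trichotomy b p.2 with hb2 | hb2 | hb2
          · exact ih hb hb2
          · exact (hb2 ▸ hab).tail (Or.inr hp')
          · -- b > p.2 : arc (c,b) crosses p
            have hcbA : (c, b) ∈ A := by
              rcases hbc with h | h
              · exact absurd (hdiag _ h).2.1 (by simp; omega)
              · exact h
            exact absurd ⟨hc1, hc2, hb2⟩ (hcross _ hp _ hcbA)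
    exact hpp (key k hkP hk1 hk2)
end Paper
end

section
/- For every integer n ≥ 2, the number c_n of connected zigzag stacks on [n] (zigzag stacks whose underlying graph on the vertex set [n] is connected) equals n − 1. -/
open PowerSeries

namespace Paper

/-! ### Auxiliary development for Statement 2 -/

section Aux

open Finset

/-- Basic facts about `ld`/`rd`. -/
lemma ld_mono {A B : Arcs} (h : A ⊆ B) (v : ℕ) : ld A v ≤ ld B v :=
  Finset.card_le_card (Finset.filter_subset_filter _ h)

lemma rd_mono {A B : Arcs} (h : A ⊆ B) (v : ℕ) : rd A v ≤ rd B v :=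
  Finset.card_le_card (Finset.filter_subset_filter _ h)

lemma ld_eq_zero {A : Arcs} {v : ℕ} (h : ∀ p ∈ A, p.2 ≠ v) : ld A v = 0 := by
  unfold ld
  rw [Finset.card_eq_zero, Finset.filter_eq_empty_iff]
  exact h

lemma rd_eq_zero {A : Arcs} {v : ℕ} (h : ∀ p ∈ A, p.1 ≠ v) : rd A v = 0 := by
  unfold rd
  rw [Finset.card_eq_zero, Finset.filter_eq_empty_iff]
  exact h

lemma ld_insert_le (p : ℕ × ℕ) (A : Arcs) (v : ℕ) : ld (insert p A) v ≤ ld A v + 1 := by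
  unfold ld
  rw [Finset.filter_insert]
  split
  · exact Finset.card_insert_le _ _
  · exact Nat.le_succ_of_le le_rfl

lemma rd_insert_le (p : ℕ × ℕ) (A : Arcs) (v : ℕ) : rd (insert p A) v ≤ rd A v + 1 := by
  unfold rd
  rw [Finset.filter_insert]
  split
  · exact Finset.card_insert_le _ _
  · exact Nat.le_succ_of_le le_rfl

lemma ld_insert_of_ne {p : ℕ × ℕ} {v : ℕ} (A : Arcs) (h : p.2 ≠ v) :
    ld (insert p A) v = ld A v := by
  unfold ld
  rw [Finset.filter_insert, if_neg h]

lemma rd_insert_of_ne {p : ℕ × ℕ} {v : ℕ} (A : Arcs) (h : p.1 ≠ v) :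
    rd (insert p A) v = rd A v := by
  unfold rd
  rw [Finset.filter_insert, if_neg h]

lemma ld_union_le (A B : Arcs) (v : ℕ) : ld (A ∪ B) v ≤ ld A v + ld B v := by
  unfold ld
  rw [Finset.filter_union]
  exact Finset.card_union_le _ _

lemma rd_union_le (A B : Arcs) (v : ℕ) : rd (A ∪ B) v ≤ rd A v + rd B v := by
  unfold rd
  rw [Finset.filter_union]
  exact Finset.card_union_le _ _

lemma ld_pos_of_mem {A : Arcs} {p : ℕ × ℕ} (h : p ∈ A) : 1 ≤ ld A p.2 :=
  Finset.card_pos.mpr ⟨p, Finset.mem_filter.mpr ⟨h, rfl⟩⟩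

lemma rd_pos_of_mem {A : Arcs} {p : ℕ × ℕ} (h : p ∈ A) : 1 ≤ rd A p.1 :=
  Finset.card_pos.mpr ⟨p, Finset.mem_filter.mpr ⟨h, rfl⟩⟩

lemma exists_of_ld_pos {A : Arcs} {v : ℕ} (h : 1 ≤ ld A v) : ∃ p ∈ A, p.2 = v := by
  obtain ⟨p, hp⟩ := Finset.card_pos.mp h
  rw [Finset.mem_filter] at hp
  exact ⟨p, hp.1, hp.2⟩

lemma exists_of_rd_pos {A : Arcs} {v : ℕ} (h : 1 ≤ rd A v) : ∃ p ∈ A, p.1 = v := by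
  obtain ⟨p, hp⟩ := Finset.card_pos.mp h
  rw [Finset.mem_filter] at hp
  exact ⟨p, hp.1, hp.2⟩

lemma ld_erase {A : Arcs} {a v : ℕ} (h : (a, v) ∈ A) :
    ld (A.erase (a, v)) v = ld A v - 1 := by
  unfold ld
  rw [Finset.filter_erase]
  exact Finset.card_erase_of_mem (Finset.mem_filter.mpr ⟨h, rfl⟩)

lemma rd_erase {A : Arcs} {a v : ℕ} (h : (a, v) ∈ A) :
    rd (A.erase (a, v)) a = rd A a - 1 := by
  unfold rd
  rw [Finset.filter_erase]
  exact Finset.card_erase_of_mem (Finset.mem_filter.mpr ⟨h, rfl⟩)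

lemma rd_unique {A : Arcs} {a x y : ℕ} (h : rd A a ≤ 1) (h1 : (a, x) ∈ A) (h2 : (a, y) ∈ A) :
    x = y := by
  have := Finset.card_le_one.mp h (a, x) (Finset.mem_filter.mpr ⟨h1, rfl⟩)
    (a, y) (Finset.mem_filter.mpr ⟨h2, rfl⟩)
  exact congrArg Prod.snd this

lemma ld_unique {A : Arcs} {b x y : ℕ} (h : ld A b ≤ 1) (h1 : (x, b) ∈ A) (h2 : (y, b) ∈ A) :
    x = y := by
  have := Finset.card_le_one.mp h (x, b) (Finset.mem_filter.mpr ⟨h1, rfl⟩)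
    (y, b) (Finset.mem_filter.mpr ⟨h2, rfl⟩)
  exact congrArg Prod.fst this

lemma adj_symm (A : Arcs) : Symmetric (adj A) := fun _ _ h => h.symm

/-- A set of vertices closed under arcs absorbs reachability. -/
lemma reach_mem {A : Arcs} {S : Set ℕ} (h : ∀ p ∈ A, (p.1 ∈ S ↔ p.2 ∈ S))
    {u v : ℕ} (hr : Relation.ReflTransGen (adj A) u v) (hu : u ∈ S) : v ∈ S := by
  induction hr with
  | refl => exact hu
  | tail _ hadj ih =>
      rcases hadj with hq | hq
      · exact (h _ hq).mp ih
      · exact (h _ hq).mpr ih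

/-- Restriction of connectivity to a vertex set `S` whose only boundary arcs touch the
gateway vertex `x` (on the `S`-side). -/
lemma conn_restrict {A B : Arcs} {S : Set ℕ} {x : ℕ}
    (hB : ∀ p ∈ A, p.1 ∈ S → p.2 ∈ S → p ∈ B)
    (hbd1 : ∀ p ∈ A, p.1 ∈ S → p.2 ∉ S → p.1 = x)
    (hbd2 : ∀ p ∈ A, p.1 ∉ S → p.2 ∈ S → p.2 = x)
    {u v : ℕ} (h : Relation.ReflTransGen (adj A) u v) (hu : u ∈ S) (hv : v ∈ S) :
    Relation.ReflTransGen (adj B) u v := by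
  classical
  have key : ∀ w, Relation.ReflTransGen (adj A) u w →
      (w ∈ S → Relation.ReflTransGen (adj B) u w) ∧
      (w ∉ S → Relation.ReflTransGen (adj B) u x) := by
    intro w hw
    induction hw with
    | refl => exact ⟨fun _ => Relation.ReflTransGen.refl, fun hn => absurd hu hn⟩
    | @tail c d hc hadj ih =>
        constructor
        · intro hd
          by_cases hcS : c ∈ S
          · refine (ih.1 hcS).tail ?_
            rcases hadj with hq | hq
            · exact Or.inl (hB _ hq hcS hd)
            · exact Or.inr (hB _ hq hd hcS)
          · have hdx : d = x := by
              rcases hadj with hq | hq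
              · exact hbd2 _ hq hcS hd
              · exact hbd1 _ hq hd hcS
            rw [hdx]
            exact ih.2 hcS
        · intro hd
          by_cases hcS : c ∈ S
          · have hcx : c = x := by
              rcases hadj with hq | hq
              · exact hbd1 _ hq hcS hd
              · exact hbd2 _ hq hd hcS
            rw [← hcx]
            exact ih.1 hcS
          · exact ih.2 hcS
  exact (key v h).1 hv

end Aux
section ZZpart

open Finset

/-- Connected zigzag stack with all arcs inside the interval `[a,b]`. -/
structure CZS (a b : ℕ) (A : Arcs) : Prop where
  within : ∀ p ∈ A, a ≤ p.1 ∧ p.1 < p.2 ∧ p.2 ≤ b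
  nc : ∀ p ∈ A, ∀ q ∈ A, ¬ Crossing p q
  deg2 : ∀ v, deg A v ≤ 2
  mix : ∀ v, ¬ (1 ≤ ld A v ∧ 1 ≤ rd A v)
  conn : ∀ u v, a ≤ u → u ≤ b → a ≤ v → v ≤ b → Relation.ReflTransGen (adj A) u v

lemma CZS_empty {a b : ℕ} (h : b ≤ a) : CZS a b (∅ : Arcs) := by
  refine ⟨?_, ?_, ?_, ?_, ?_⟩
  · intro p hp; simp at hp
  · intro p hp; simp at hp
  · intro v; simp [deg, ld, rd]
  · intro v; simp [ld]
  · intro u v h1 h2 h3 h4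
    have : u = v := by omega
    rw [this]

/-- The rainbow zigzag family: `ZZ true a b` has a single arc at `a` (namely `(a,b)`),
`ZZ false a b` has a single arc at `b` (namely `(a,b)`). -/
def ZZ (s : Bool) (a b : ℕ) : Arcs :=
  if h : b ≤ a then ∅
  else
    if s then insert (a, b) (ZZ false (a + 1) b)
    else insert (a, b) (ZZ true a (b - 1))
termination_by (b - a)
decreasing_by
  · omega
  · omega

lemma ZZ_of_le {s : Bool} {a b : ℕ} (h : b ≤ a) : ZZ s a b = ∅ := by
  rw [ZZ]; simp [h]

lemma ZZ_true_eq {a b : ℕ} (h : a < b) :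
    ZZ true a b = insert (a, b) (ZZ false (a + 1) b) := by
  rw [ZZ]; simp [Nat.not_le.mpr h]

lemma ZZ_false_eq {a b : ℕ} (h : a < b) :
    ZZ false a b = insert (a, b) (ZZ true a (b - 1)) := by
  rw [ZZ]; simp [Nat.not_le.mpr h]

lemma ZZ_props : ∀ N s a b, b ≤ a + N →
    CZS a b (ZZ s a b) ∧
      (s = true → rd (ZZ s a b) a ≤ 1) ∧ (s = false → ld (ZZ s a b) b ≤ 1) := by
  intro N
  induction N with
  | zero =>
      intro s a b hb
      have h : b ≤ a := by omega
      rw [ZZ_of_le h]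
      exact ⟨CZS_empty h, fun _ => by simp [rd], fun _ => by simp [ld]⟩
  | succ N IH =>
      intro s a b hb
      by_cases hab : b ≤ a
      · rw [ZZ_of_le hab]
        exact ⟨CZS_empty hab, fun _ => by simp [rd], fun _ => by simp [ld]⟩
      push_neg at hab
      cases s with
      | true =>
          rw [ZZ_true_eq hab]
          set E := ZZ false (a + 1) b with hE
          obtain ⟨hC, -, hld⟩ := IH false (a + 1) b (by omega)
          have hld := hld rfl
          rw [← hE] at hC hld
          have hW := hC.within
          have hEld0 : ∀ v, v ≤ a → ld E v = 0 := fun v hv =>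
            ld_eq_zero (fun p hp => by have := hW p hp; omega)
          have hErd0 : ∀ v, v ≤ a ∨ v = b → rd E v = 0 := fun v hv =>
            rd_eq_zero (fun p hp => by have := hW p hp; omega)
          refine ⟨⟨?_, ?_, ?_, ?_, ?_⟩, ?_, ?_⟩
          · intro p hp
            rcases Finset.mem_insert.mp hp with h | h
            · subst h; simp; omega
            · have := hW p h; omega
          · intro p hp q hq
            rcases Finset.mem_insert.mp hp with h | h <;>
              rcases Finset.mem_insert.mp hq with h' | h'
            · subst h; subst h'; simp [Crossing]
            · subst h; have := hW q h'; simp [Crossing]; omega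
            · subst h'; have := hW p h; simp [Crossing]; omega
            · exact hC.nc p h q h'
          · intro v
            unfold deg
            by_cases hva : a = v
            · subst hva
              have h1 : ld (insert (a, b) E) a = 0 :=
                ld_eq_zero (fun p hp => by
                  rcases Finset.mem_insert.mp hp with h | h
                  · subst h; simp; omega
                  · have := hW p h; simp; omega)
              have h2 : rd (insert (a, b) E) a ≤ rd E a + 1 := rd_insert_le _ _ _
              have h3 : rd E a = 0 := hErd0 a (Or.inl le_rfl)
              omega
            by_cases hvb : b = v
            · subst hvb
              have h1 : ld (insert (a, b) E) b ≤ ld E b + 1 := ld_insert_le _ _ _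
              have h2 : rd (insert (a, b) E) b = 0 :=
                rd_eq_zero (fun p hp => by
                  rcases Finset.mem_insert.mp hp with h | h
                  · subst h; simp; omega
                  · have := hW p h; simp; omega)
              omega
            · have h1 : ld (insert (a, b) E) v = ld E v := ld_insert_of_ne _ hvb
              have h2 : rd (insert (a, b) E) v = rd E v := rd_insert_of_ne _ hva
              have := hC.deg2 v
              unfold deg at this
              omega
          · intro v
            by_cases hva : a = v
            · subst hva
              have h1 : ld (insert (a, b) E) a = 0 :=
                ld_eq_zero (fun p hp => by
                  rcases Finset.mem_insert.mp hp with h | h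
                  · subst h; simp; omega
                  · have := hW p h; simp; omega)
              omega
            by_cases hvb : b = v
            · subst hvb
              have h2 : rd (insert (a, b) E) b = 0 :=
                rd_eq_zero (fun p hp => by
                  rcases Finset.mem_insert.mp hp with h | h
                  · subst h; simp; omega
                  · have := hW p h; simp; omega)
              omega
            · have h1 : ld (insert (a, b) E) v = ld E v := ld_insert_of_ne _ hvb
              have h2 : rd (insert (a, b) E) v = rd E v := rd_insert_of_ne _ hva
              rw [h1, h2]
              exact hC.mix v
          · -- connectivity
            have hmono : ∀ {x y}, Relation.ReflTransGen (adj E) x y →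
                Relation.ReflTransGen (adj (insert (a, b) E)) x y :=
              fun h => Relation.ReflTransGen.mono (fun x y hxy => by
                rcases hxy with h | h
                · exact Or.inl (Finset.mem_insert_of_mem h)
                · exact Or.inr (Finset.mem_insert_of_mem h)) _ _ h
            have hedge : Relation.ReflTransGen (adj (insert (a, b) E)) a b :=
              Relation.ReflTransGen.single (Or.inl (Finset.mem_insert_self _ _))
            have key : ∀ w, a ≤ w → w ≤ b → Relation.ReflTransGen (adj (insert (a, b) E)) a w := by
              intro w hw1 hw2
              rcases Nat.eq_or_lt_of_le hw1 with h | h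
              · rw [← h]
              · exact hedge.trans (hmono (hC.conn b w (by omega) le_rfl (by omega) hw2))
            intro u v h1 h2 h3 h4
            exact (@Std.Symm.symm _ _ (@Relation.ReflTransGen.stdSymm _ _ ⟨fun a b h => adj_symm _ h⟩) _ _ (key u h1 h2)).trans (key v h3 h4)
          · intro _
            have h2 : rd (insert (a, b) E) a ≤ rd E a + 1 := rd_insert_le _ _ _
            have h3 : rd E a = 0 := hErd0 a (Or.inl le_rfl)
            omega
          · intro h; cases h
      | false =>
          rw [ZZ_false_eq hab]
          set E := ZZ true a (b - 1) with hE
          obtain ⟨hC, hrd, -⟩ := IH true a (b - 1) (by omega)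
          have hrd := hrd rfl
          rw [← hE] at hC hrd
          have hW := hC.within
          refine ⟨⟨?_, ?_, ?_, ?_, ?_⟩, ?_, ?_⟩
          · intro p hp
            rcases Finset.mem_insert.mp hp with h | h
            · subst h; simp; omega
            · have := hW p h; omega
          · intro p hp q hq
            rcases Finset.mem_insert.mp hp with h | h <;>
              rcases Finset.mem_insert.mp hq with h' | h'
            · subst h; subst h'; simp [Crossing]
            · subst h; have := hW q h'; simp [Crossing]; omega
            · subst h'; have := hW p h; simp [Crossing]; omega
            · exact hC.nc p h q h'
          · intro v
            unfold deg
            by_cases hva : a = v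
            · subst hva
              have h1 : ld (insert (a, b) E) a = 0 :=
                ld_eq_zero (fun p hp => by
                  rcases Finset.mem_insert.mp hp with h | h
                  · subst h; simp; omega
                  · have := hW p h; simp; omega)
              have h2 : rd (insert (a, b) E) a ≤ rd E a + 1 := rd_insert_le _ _ _
              omega
            by_cases hvb : b = v
            · subst hvb
              have h1 : ld (insert (a, b) E) b ≤ ld E b + 1 := ld_insert_le _ _ _
              have h3 : ld E b = 0 :=
                ld_eq_zero (fun p hp => by have := hW p hp; omega)
              have h2 : rd (insert (a, b) E) b = 0 :=
                rd_eq_zero (fun p hp => by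
                  rcases Finset.mem_insert.mp hp with h | h
                  · subst h; simp; omega
                  · have := hW p h; simp; omega)
              omega
            · have h1 : ld (insert (a, b) E) v = ld E v := ld_insert_of_ne _ hvb
              have h2 : rd (insert (a, b) E) v = rd E v := rd_insert_of_ne _ hva
              have := hC.deg2 v
              unfold deg at this
              omega
          · intro v
            by_cases hva : a = v
            · subst hva
              have h1 : ld (insert (a, b) E) a = 0 :=
                ld_eq_zero (fun p hp => by
                  rcases Finset.mem_insert.mp hp with h | h
                  · subst h; simp; omega
                  · have := hW p h; simp; omega)
              omega
            by_cases hvb : b = v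
            · subst hvb
              have h2 : rd (insert (a, b) E) b = 0 :=
                rd_eq_zero (fun p hp => by
                  rcases Finset.mem_insert.mp hp with h | h
                  · subst h; simp; omega
                  · have := hW p h; simp; omega)
              omega
            · have h1 : ld (insert (a, b) E) v = ld E v := ld_insert_of_ne _ hvb
              have h2 : rd (insert (a, b) E) v = rd E v := rd_insert_of_ne _ hva
              rw [h1, h2]
              exact hC.mix v
          · have hmono : ∀ {x y}, Relation.ReflTransGen (adj E) x y →
                Relation.ReflTransGen (adj (insert (a, b) E)) x y :=
              fun h => Relation.ReflTransGen.mono (fun x y hxy => by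
                rcases hxy with h | h
                · exact Or.inl (Finset.mem_insert_of_mem h)
                · exact Or.inr (Finset.mem_insert_of_mem h)) _ _ h
            have hedge : Relation.ReflTransGen (adj (insert (a, b) E)) b a :=
              Relation.ReflTransGen.single (Or.inr (Finset.mem_insert_self _ _))
            have key : ∀ w, a ≤ w → w ≤ b → Relation.ReflTransGen (adj (insert (a, b) E)) b w := by
              intro w hw1 hw2
              rcases Nat.eq_or_lt_of_le hw2 with h | h
              · rw [h]
              · exact hedge.trans (hmono (hC.conn a w le_rfl (by omega) hw1 (by omega)))
            intro u v h1 h2 h3 h4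
            exact (@Std.Symm.symm _ _ (@Relation.ReflTransGen.stdSymm _ _ ⟨fun a b h => adj_symm _ h⟩) _ _ (key u h1 h2)).trans (key v h3 h4)
          · intro h; cases h
          · intro _
            have h1 : ld (insert (a, b) E) b ≤ ld E b + 1 := ld_insert_le _ _ _
            have h3 : ld E b = 0 := ld_eq_zero (fun p hp => by have := hW p hp; omega)
            omega

end ZZpart
section Uniq

open Finset

lemma mem_of_fst {A : Arcs} {p : ℕ × ℕ} {a : ℕ} (hp : p ∈ A) (h : p.1 = a) :
    (a, p.2) ∈ A := by rw [← h]; exact hp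

lemma mem_of_snd {A : Arcs} {p : ℕ × ℕ} {b : ℕ} (hp : p ∈ A) (h : p.2 = b) :
    (p.1, b) ∈ A := by rw [← h]; exact hp

/-- In a connected stack-like structure on `[a,b]` the full arc `(a,b)` is present. -/
lemma top_arc {a b : ℕ} {A : Arcs} (hC : CZS a b A) (hab : a < b) : (a, b) ∈ A := by
  classical
  -- vertex a has a neighbor
  have hreach := hC.conn a b le_rfl (by omega) (by omega) le_rfl
  have hstart : ∃ c, (a, c) ∈ A := by
    rcases Relation.ReflTransGen.cases_head hreach with h | ⟨c, hc, -⟩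
    · omega
    · rcases hc with h | h
      · exact ⟨c, h⟩
      · have := hC.within _ h; omega
  obtain ⟨c0, hc0⟩ := hstart
  have hne : (A.filter fun p => p.1 = a).Nonempty := ⟨(a, c0), Finset.mem_filter.mpr ⟨hc0, rfl⟩⟩
  obtain ⟨q, hq, hqmax⟩ := Finset.exists_max_image (A.filter fun p => p.1 = a) Prod.snd hne
  obtain ⟨hqA, hq1⟩ := Finset.mem_filter.mp hq
  have hcA : (a, q.2) ∈ A := mem_of_fst hqA hq1
  set c := q.2 with hcdef
  have hmax : ∀ x, (a, x) ∈ A → x ≤ c := by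
    intro x hx
    exact hqmax (a, x) (Finset.mem_filter.mpr ⟨hx, rfl⟩)
  have hacb : a < c ∧ c ≤ b := by have := hC.within _ hcA; omega
  -- show c = b using closure of {v | v ≤ c}
  have hclosed : ∀ p ∈ A, (p.1 ∈ {v : ℕ | v ≤ c} ↔ p.2 ∈ {v : ℕ | v ≤ c}) := by
    intro p hp
    have hw := hC.within _ hp
    simp only [Set.mem_setOf_eq]
    constructor
    · intro h1
      by_contra h2
      push_neg at h2
      -- p.1 ≤ c < p.2
      rcases Nat.lt_or_ge p.1 a with h | h
      · omega
      rcases Nat.eq_or_lt_of_le h with h | h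
      · exact absurd (hmax p.2 (mem_of_fst hp h.symm)) (by omega)
      rcases Nat.lt_or_ge p.1 c with h' | h'
      · exact hC.nc _ hcA _ hp ⟨h, h', h2⟩
      · have h1c : p.1 = c := by omega
        exact hC.mix c ⟨ld_pos_of_mem (p := (a, c)) hcA, h1c ▸ rd_pos_of_mem hp⟩
    · intro h1; omega
  have := reach_mem hclosed hreach (by simp only [Set.mem_setOf_eq]; omega)
  simp only [Set.mem_setOf_eq] at this
  have : c = b := by omega
  rwa [this] at hcA

/-- Uniqueness: a connected zigzag stack on `[a,b]` with restricted degree at the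
appropriate end equals the corresponding rainbow zigzag. -/
lemma uniq : ∀ N (s : Bool) a b (A : Arcs), b ≤ a + N → CZS a b A →
    (s = true → rd A a ≤ 1) → (s = false → ld A b ≤ 1) → A = ZZ s a b := by
  intro N
  induction N with
  | zero =>
      intro s a b A hb hC _ _
      rw [ZZ_of_le (by omega)]
      rw [Finset.eq_empty_iff_forall_notMem]
      intro p hp
      have := hC.within _ hp
      omega
  | succ N IH =>
      intro s a b A hb hC hs1 hs2
      by_cases hab : b ≤ a
      · rw [ZZ_of_le hab]
        rw [Finset.eq_empty_iff_forall_notMem]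
        intro p hp
        have := hC.within _ hp
        omega
      push_neg at hab
      have htop : (a, b) ∈ A := top_arc hC hab
      cases s with
      | true =>
          have hrd : rd A a ≤ 1 := hs1 rfl
          have huniqa : ∀ x, (a, x) ∈ A → x = b := fun x hx => rd_unique hrd hx htop
          set A' := A.erase (a, b) with hA'
          have hsub : A' ⊆ A := Finset.erase_subset _ _
          have hW' : ∀ p ∈ A', a + 1 ≤ p.1 ∧ p.1 < p.2 ∧ p.2 ≤ b := by
            intro p hp
            obtain ⟨hne, hpA⟩ := Finset.mem_erase.mp hp
            have hw := hC.within _ hpA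
            have : p.1 ≠ a := by
              intro h
              apply hne
              have : p.2 = b := huniqa p.2 (mem_of_fst hpA h)
              rw [← h, ← this]
            omega
          have hC' : CZS (a + 1) b A' := by
            refine ⟨hW', fun p hp q hq => hC.nc p (hsub hp) q (hsub hq), ?_, ?_, ?_⟩
            · intro v
              have h1 := ld_mono hsub v
              have h2 := rd_mono hsub v
              have := hC.deg2 v
              unfold deg at *
              omega
            · intro v ⟨h1, h2⟩
              exact hC.mix v ⟨le_trans h1 (ld_mono hsub v), le_trans h2 (rd_mono hsub v)⟩
            · intro u v h1 h2 h3 h4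
              refine conn_restrict (S := {v : ℕ | a + 1 ≤ v}) (x := b) ?_ ?_ ?_
                (hC.conn u v (by omega) h2 (by omega) h4) (by simpa using h1) (by simpa using h3)
              · intro p hp hp1 _
                simp only [Set.mem_setOf_eq] at hp1
                refine Finset.mem_erase.mpr ⟨?_, hp⟩
                intro h
                rw [h] at hp1
                omega
              · intro p hp hp1 hp2
                have := hC.within _ hp
                simp only [Set.mem_setOf_eq] at hp1 hp2
                omega
              · intro p hp hp1 hp2
                simp only [Set.mem_setOf_eq] at hp1 hp2
                have hw := hC.within _ hp
                have hp1a : p.1 = a := by omega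
                exact huniqa p.2 (mem_of_fst hp hp1a)
          have hld' : ld A' b ≤ 1 := by
            have := ld_erase (A := A) (a := a) (v := b) htop
            rw [← hA'] at this
            have h2 : ld A b ≤ 2 := by have := hC.deg2 b; unfold deg at this; omega
            omega
          have := IH false (a + 1) b A' (by omega) hC' (by intro h; cases h) (fun _ => hld')
          rw [ZZ_true_eq hab, ← this, hA', Finset.insert_erase htop]
      | false =>
          have hld : ld A b ≤ 1 := hs2 rfl
          have huniqb : ∀ x, (x, b) ∈ A → x = a := fun x hx => ld_unique hld hx htop
          set A' := A.erase (a, b) with hA'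
          have hsub : A' ⊆ A := Finset.erase_subset _ _
          have hW' : ∀ p ∈ A', a ≤ p.1 ∧ p.1 < p.2 ∧ p.2 ≤ b - 1 := by
            intro p hp
            obtain ⟨hne, hpA⟩ := Finset.mem_erase.mp hp
            have hw := hC.within _ hpA
            have : p.2 ≠ b := by
              intro h
              apply hne
              have : p.1 = a := huniqb p.1 (mem_of_snd hpA h)
              rw [← h, ← this]
            omega
          have hC' : CZS a (b - 1) A' := by
            refine ⟨hW', fun p hp q hq => hC.nc p (hsub hp) q (hsub hq), ?_, ?_, ?_⟩
            · intro v
              have h1 := ld_mono hsub v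
              have h2 := rd_mono hsub v
              have := hC.deg2 v
              unfold deg at *
              omega
            · intro v ⟨h1, h2⟩
              exact hC.mix v ⟨le_trans h1 (ld_mono hsub v), le_trans h2 (rd_mono hsub v)⟩
            · intro u v h1 h2 h3 h4
              refine conn_restrict (S := {v : ℕ | v ≤ b - 1}) (x := a) ?_ ?_ ?_
                (hC.conn u v h1 (by omega) h3 (by omega)) (by simpa using h2) (by simpa using h4)
              · intro p hp hp1 hp2
                simp only [Set.mem_setOf_eq] at hp1 hp2
                refine Finset.mem_erase.mpr ⟨?_, hp⟩
                intro h
                rw [h] at hp2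
                omega
              · intro p hp hp1 hp2
                simp only [Set.mem_setOf_eq] at hp1 hp2
                have hw := hC.within _ hp
                have hp2b : p.2 = b := by omega
                exact huniqb p.1 (mem_of_snd hp hp2b)
              · intro p hp hp1 hp2
                have := hC.within _ hp
                simp only [Set.mem_setOf_eq] at hp1 hp2
                omega
          have hrd' : rd A' a ≤ 1 := by
            have := rd_erase (A := A) (a := a) (v := b) htop
            rw [← hA'] at this
            have h2 : rd A a ≤ 2 := by have := hC.deg2 a; unfold deg at this; omega
            omega
          have := IH true a (b - 1) A' (by omega) hC' (fun _ => hrd') (by intro h; cases h)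
          rw [ZZ_false_eq hab, ← this, hA', Finset.insert_erase htop]

end Uniq
section Sfam

open Finset

/-- The `k`-th connected zigzag stack on `[n]`, for `1 ≤ k ≤ n-1`. -/
def Sfam (n k : ℕ) : Arcs :=
  insert (1, n) (insert (1, k + 1) (ZZ false 2 (k + 1) ∪ ZZ false (k + 2) n))

lemma Sfam_last {n : ℕ} (hn : 2 ≤ n) : Sfam n (n - 1) = ZZ true 1 n := by
  have h1 : n - 1 + 1 = n := by omega
  have h2 : ZZ false (n - 1 + 2) n = ∅ := ZZ_of_le (by omega)
  rw [Sfam, h1, h2, Finset.union_empty, Finset.insert_idem, ZZ_true_eq (by omega)]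

lemma mem_Sfam {n k : ℕ} (p : ℕ × ℕ) :
    p ∈ Sfam n k ↔ p = (1, n) ∨ p = (1, k + 1) ∨ p ∈ ZZ false 2 (k + 1) ∨
      p ∈ ZZ false (k + 2) n := by
  simp [Sfam, or_assoc]

lemma Sfam_CZS {n k : ℕ} (hn : 2 ≤ n) (hk1 : 1 ≤ k) (hk2 : k ≤ n - 1) :
    CZS 1 n (Sfam n k) := by
  by_cases hlast : k = n - 1
  · rw [hlast, Sfam_last hn]
    exact (ZZ_props n true 1 n (by omega)).1
  have hk2' : k ≤ n - 2 := by omega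
  obtain ⟨hC1, -, hld1⟩ := ZZ_props (n + k) false 2 (k + 1) (by omega)
  obtain ⟨hC2, -, hld2⟩ := ZZ_props (n + k) false (k + 2) n (by omega)
  have hld1 := hld1 rfl
  have hld2 := hld2 rfl
  have W1 := hC1.within
  have W2 := hC2.within
  have hS1 : (1, n) ∈ Sfam n k := Finset.mem_insert_self _ _
  have hS2 : (1, k + 1) ∈ Sfam n k :=
    Finset.mem_insert_of_mem (Finset.mem_insert_self _ _)
  refine ⟨?_, ?_, ?_, ?_, ?_⟩
  · -- within
    intro p hp
    rcases (mem_Sfam p).mp hp with h | h | h | h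
    · subst h; simp; omega
    · subst h; simp; omega
    · have := W1 p h; omega
    · have := W2 p h; omega
  · -- noncrossing
    intro p hp q hq
    rcases (mem_Sfam p).mp hp with h | h | h | h <;>
      rcases (mem_Sfam q).mp hq with h' | h' | h' | h'
    · subst h; subst h'; simp [Crossing]
    · subst h; subst h'; simp [Crossing] <;> omega
    · subst h; have := W1 q h'; simp [Crossing] <;> omega
    · subst h; have := W2 q h'; simp [Crossing] <;> omega
    · subst h; subst h'; simp [Crossing]
    · subst h; subst h'; simp [Crossing]
    · subst h; have := W1 q h'; simp [Crossing] <;> omega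
    · subst h; have := W2 q h'; simp [Crossing] <;> omega
    · subst h'; have := W1 p h; simp [Crossing] <;> omega
    · subst h'; have := W1 p h; simp [Crossing] <;> omega
    · exact hC1.nc p h q h'
    · have hp1 := W1 p h; have hq1 := W2 q h'
      rintro ⟨c1, c2, c3⟩; omega
    · subst h'; have := W2 p h; simp [Crossing] <;> omega
    · subst h'; have := W2 p h; simp [Crossing] <;> omega
    · have hp1 := W2 p h; have hq1 := W1 q h'
      rintro ⟨c1, c2, c3⟩; omega
    · exact hC2.nc p h q h'
  · -- degrees
    intro v
    unfold deg
    by_cases hv1 : v = 1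
    · subst hv1
      have h1 : ld (Sfam n k) 1 = 0 := ld_eq_zero (fun p hp => by
        rcases (mem_Sfam p).mp hp with h | h | h | h
        · subst h; simp; omega
        · subst h; simp; omega
        · have := W1 p h; omega
        · have := W2 p h; omega)
      have h2 : rd (ZZ false 2 (k + 1) ∪ ZZ false (k + 2) n) 1 = 0 :=
        rd_eq_zero (fun p hp => by
          rcases Finset.mem_union.mp hp with h | h
          · have := W1 p h; omega
          · have := W2 p h; omega)
      have h3 := rd_insert_le (1, k + 1) (ZZ false 2 (k + 1) ∪ ZZ false (k + 2) n) 1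
      have h4 := rd_insert_le (1, n) (insert (1, k + 1)
        (ZZ false 2 (k + 1) ∪ ZZ false (k + 2) n)) 1
      rw [Sfam] at h1 ⊢
      omega
    by_cases hvj : v = k + 1
    · subst hvj
      have h1 : rd (Sfam n k) (k + 1) = 0 := rd_eq_zero (fun p hp => by
        rcases (mem_Sfam p).mp hp with h | h | h | h
        · subst h; simp; omega
        · subst h; simp; omega
        · have := W1 p h; omega
        · have := W2 p h; omega)
      have h2 : ld (ZZ false (k + 2) n) (k + 1) = 0 :=
        ld_eq_zero (fun p hp => by have := W2 p hp; omega)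
      have h3 := ld_union_le (ZZ false 2 (k + 1)) (ZZ false (k + 2) n) (k + 1)
      have h4 := ld_insert_le (1, k + 1) (ZZ false 2 (k + 1) ∪ ZZ false (k + 2) n) (k + 1)
      have h5 : ld (Sfam n k) (k + 1) = ld (insert (1, k + 1)
          (ZZ false 2 (k + 1) ∪ ZZ false (k + 2) n)) (k + 1) := by
        rw [Sfam]; exact ld_insert_of_ne _ (by simp; omega)
      omega
    by_cases hvn : n = v
    · subst hvn
      have h1 : rd (Sfam n k) n = 0 := rd_eq_zero (fun p hp => by
        rcases (mem_Sfam p).mp hp with h | h | h | h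
        · subst h; simp; omega
        · subst h; simp; omega
        · have := W1 p h; omega
        · have := W2 p h; omega)
      have h2 : ld (ZZ false 2 (k + 1)) n = 0 :=
        ld_eq_zero (fun p hp => by have := W1 p hp; omega)
      have h3 := ld_union_le (ZZ false 2 (k + 1)) (ZZ false (k + 2) n) n
      have h4 := ld_insert_le (1, n) (insert (1, k + 1)
        (ZZ false 2 (k + 1) ∪ ZZ false (k + 2) n)) n
      have h5 : ld (insert (1, k + 1) (ZZ false 2 (k + 1) ∪ ZZ false (k + 2) n)) n =
          ld (ZZ false 2 (k + 1) ∪ ZZ false (k + 2) n) n :=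
        ld_insert_of_ne _ (by simp; omega)
      rw [Sfam] at h1 ⊢
      omega
    by_cases hvle : v ≤ k + 1
    · -- generic vertex in the left part
      have e1 : ld (Sfam n k) v = ld (ZZ false 2 (k + 1) ∪ ZZ false (k + 2) n) v := by
        rw [Sfam, ld_insert_of_ne _ (by simp; omega), ld_insert_of_ne _ (by simp; omega)]
      have e2 : rd (Sfam n k) v = rd (ZZ false 2 (k + 1) ∪ ZZ false (k + 2) n) v := by
        rw [Sfam, rd_insert_of_ne _ (by simp; omega), rd_insert_of_ne _ (by simp; omega)]
      have h2 : ld (ZZ false (k + 2) n) v = 0 :=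
        ld_eq_zero (fun p hp => by have := W2 p hp; omega)
      have h2' : rd (ZZ false (k + 2) n) v = 0 :=
        rd_eq_zero (fun p hp => by have := W2 p hp; omega)
      have h3 := ld_union_le (ZZ false 2 (k + 1)) (ZZ false (k + 2) n) v
      have h3' := rd_union_le (ZZ false 2 (k + 1)) (ZZ false (k + 2) n) v
      have h4 := hC1.deg2 v
      unfold deg at h4
      omega
    · -- generic vertex in the right part
      have e1 : ld (Sfam n k) v = ld (ZZ false 2 (k + 1) ∪ ZZ false (k + 2) n) v := by
        rw [Sfam, ld_insert_of_ne _ (by simp; omega), ld_insert_of_ne _ (by simp; omega)]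
      have e2 : rd (Sfam n k) v = rd (ZZ false 2 (k + 1) ∪ ZZ false (k + 2) n) v := by
        rw [Sfam, rd_insert_of_ne _ (by simp; omega), rd_insert_of_ne _ (by simp; omega)]
      have h2 : ld (ZZ false 2 (k + 1)) v = 0 :=
        ld_eq_zero (fun p hp => by have := W1 p hp; omega)
      have h2' : rd (ZZ false 2 (k + 1)) v = 0 :=
        rd_eq_zero (fun p hp => by have := W1 p hp; omega)
      have h3 := ld_union_le (ZZ false 2 (k + 1)) (ZZ false (k + 2) n) v
      have h3' := rd_union_le (ZZ false 2 (k + 1)) (ZZ false (k + 2) n) v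
      have h4 := hC2.deg2 v
      unfold deg at h4
      omega
  · -- mixed condition
    intro v ⟨hldv, hrdv⟩
    by_cases hv1 : v = 1
    · subst hv1
      obtain ⟨p, hp, hp2⟩ := exists_of_ld_pos hldv
      rcases (mem_Sfam p).mp hp with h | h | h | h
      · subst h; simp at hp2; omega
      · subst h; simp at hp2; omega
      · have := W1 p h; omega
      · have := W2 p h; omega
    by_cases hvj : v = k + 1
    · subst hvj
      obtain ⟨p, hp, hp1⟩ := exists_of_rd_pos hrdv
      rcases (mem_Sfam p).mp hp with h | h | h | h
      · subst h; simp at hp1; omega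
      · subst h; simp at hp1; omega
      · have := W1 p h; omega
      · have := W2 p h; omega
    by_cases hvn : n = v
    · subst hvn
      obtain ⟨p, hp, hp1⟩ := exists_of_rd_pos hrdv
      rcases (mem_Sfam p).mp hp with h | h | h | h
      · subst h; simp at hp1; omega
      · subst h; simp at hp1; omega
      · have := W1 p h; omega
      · have := W2 p h; omega
    by_cases hvle : v ≤ k + 1
    · have hl : 1 ≤ ld (ZZ false 2 (k + 1)) v := by
        obtain ⟨p, hp, hp2⟩ := exists_of_ld_pos hldv
        rcases (mem_Sfam p).mp hp with h | h | h | h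
        · subst h; simp at hp2; omega
        · subst h; simp at hp2; omega
        · exact hp2 ▸ ld_pos_of_mem h
        · have := W2 p h; omega
      have hr : 1 ≤ rd (ZZ false 2 (k + 1)) v := by
        obtain ⟨p, hp, hp1⟩ := exists_of_rd_pos hrdv
        rcases (mem_Sfam p).mp hp with h | h | h | h
        · subst h; simp at hp1; omega
        · subst h; simp at hp1; omega
        · exact hp1 ▸ rd_pos_of_mem h
        · have := W2 p h; omega
      exact hC1.mix v ⟨hl, hr⟩
    · have hl : 1 ≤ ld (ZZ false (k + 2) n) v := by
        obtain ⟨p, hp, hp2⟩ := exists_of_ld_pos hldv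
        rcases (mem_Sfam p).mp hp with h | h | h | h
        · subst h; simp at hp2; omega
        · subst h; simp at hp2; omega
        · have := W1 p h; omega
        · exact hp2 ▸ ld_pos_of_mem h
      have hr : 1 ≤ rd (ZZ false (k + 2) n) v := by
        obtain ⟨p, hp, hp1⟩ := exists_of_rd_pos hrdv
        rcases (mem_Sfam p).mp hp with h | h | h | h
        · subst h; simp at hp1; omega
        · subst h; simp at hp1; omega
        · have := W1 p h; omega
        · exact hp1 ▸ rd_pos_of_mem h
      exact hC2.mix v ⟨hl, hr⟩
  · -- connectivity
    have hmono1 : ∀ {x y}, Relation.ReflTransGen (adj (ZZ false 2 (k + 1))) x y →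
        Relation.ReflTransGen (adj (Sfam n k)) x y :=
      fun h => Relation.ReflTransGen.mono (fun x y hxy => by
        rcases hxy with h | h
        · exact Or.inl ((mem_Sfam _).mpr (Or.inr (Or.inr (Or.inl h))))
        · exact Or.inr ((mem_Sfam _).mpr (Or.inr (Or.inr (Or.inl h))))) _ _ h
    have hmono2 : ∀ {x y}, Relation.ReflTransGen (adj (ZZ false (k + 2) n)) x y →
        Relation.ReflTransGen (adj (Sfam n k)) x y :=
      fun h => Relation.ReflTransGen.mono (fun x y hxy => by
        rcases hxy with h | h
        · exact Or.inl ((mem_Sfam _).mpr (Or.inr (Or.inr (Or.inr h))))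
        · exact Or.inr ((mem_Sfam _).mpr (Or.inr (Or.inr (Or.inr h))))) _ _ h
    have key : ∀ w, 1 ≤ w → w ≤ n → Relation.ReflTransGen (adj (Sfam n k)) w 1 := by
      intro w hw1 hw2
      by_cases h1 : w = 1
      · rw [h1]
      by_cases h2 : w ≤ k + 1
      · exact (hmono1 (hC1.conn w (k + 1) (by omega) h2 (by omega) le_rfl)).tail
          (Or.inr hS2)
      · exact (hmono2 (hC2.conn w n (by omega) hw2 (by omega) le_rfl)).tail
          (Or.inr hS1)
    intro u v h1 h2 h3 h4
    exact (key u h1 h2).trans (@Std.Symm.symm _ _ (@Relation.ReflTransGen.stdSymm _ _ ⟨fun a b h => adj_symm _ h⟩) _ _ (key v h3 h4))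

end Sfam
section Final

open Finset

lemma Sfam_fst_one {n k j : ℕ} (h : (1, j) ∈ Sfam n k) : j = n ∨ j = k + 1 := by
  have W1 := (ZZ_props (n + k) false 2 (k + 1) (by omega)).1.within
  have W2 := (ZZ_props (n + k) false (k + 2) n (by omega)).1.within
  rcases (mem_Sfam _).mp h with h | h | h | h
  · left; exact congrArg Prod.snd h
  · right; exact congrArg Prod.snd h
  · have := W1 _ h; simp at this
  · have := W2 _ h; simp at this

lemma Sfam_injOn {n : ℕ} (hn : 2 ≤ n) :
    Set.InjOn (Sfam n) ↑(Finset.Icc 1 (n - 1)) := by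
  intro k hk k' hk' heq
  simp only [Finset.coe_Icc, Set.mem_Icc] at hk hk'
  have h1 : (1, k + 1) ∈ Sfam n k' := heq ▸ ((mem_Sfam _).mpr (Or.inr (Or.inl rfl)))
  have h2 : (1, k' + 1) ∈ Sfam n k := heq ▸ ((mem_Sfam _).mpr (Or.inr (Or.inl rfl)))
  rcases Sfam_fst_one h1 with h | h
  · rcases Sfam_fst_one h2 with h' | h' <;> omega
  · omega

/-- Classification of connected zigzag stacks. -/
lemma classify {n : ℕ} (hn : 2 ≤ n) (A : Arcs) :
    (IsZigzag n A ∧ ConnectedOn n A) ↔ ∃ k, 1 ≤ k ∧ k ≤ n - 1 ∧ A = Sfam n k := by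
  constructor
  · rintro ⟨⟨⟨hdia, hnc⟩, hdeg, hmix⟩, hconn⟩
    have hC : CZS 1 n A := ⟨hdia, hnc, hdeg, hmix, hconn⟩
    have htop : (1, n) ∈ A := top_arc hC (by omega)
    by_cases hrd1 : rd A 1 ≤ 1
    · refine ⟨n - 1, by omega, le_rfl, ?_⟩
      have := uniq n true 1 n A (by omega) hC (fun _ => hrd1) (by intro h; cases h)
      rw [this, Sfam_last hn]
    · push_neg at hrd1
      have hrd2 : rd A 1 ≤ 2 := by have := hC.deg2 1; unfold deg at this; omega
      obtain ⟨q, hqT, hqne⟩ := Finset.exists_mem_ne (s := A.filter fun p => p.1 = 1)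
        (by exact hrd1) (1, n)
      obtain ⟨hqA, hq1⟩ := Finset.mem_filter.mp hqT
      have hjA : (1, q.2) ∈ A := mem_of_fst hqA hq1
      set j := q.2 with hjdef
      have hjn : j ≠ n := by
        intro h
        exact hqne (Prod.ext_iff.mpr ⟨hq1, h⟩)
      have hjb : 1 < j ∧ j ≤ n := ⟨(hC.within _ hjA).2.1, (hC.within _ hjA).2.2⟩
      -- the only arcs at vertex 1 are (1,n) and (1,j)
      have hpair : ∀ p ∈ A, p.1 = 1 → (p = (1, n) ∨ p = (1, j)) := by
        intro p hp h1
        have hcard2 : ({(1, n), (1, j)} : Arcs).card = 2 := by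
          rw [Finset.card_insert_of_notMem (by simp [Prod.ext_iff]; omega),
            Finset.card_singleton]
        have hsub : ({(1, n), (1, j)} : Arcs) ⊆ A.filter fun p => p.1 = 1 := by
          intro x hx
          rcases Finset.mem_insert.mp hx with h | h
          · subst h; exact Finset.mem_filter.mpr ⟨htop, rfl⟩
          · rw [Finset.mem_singleton] at h
            subst h; exact Finset.mem_filter.mpr ⟨hjA, rfl⟩
        have heqT := Finset.eq_of_subset_of_card_le hsub (by
          show rd A 1 ≤ _
          omega)
        have : p ∈ ({(1, n), (1, j)} : Arcs) := by
          rw [heqT]; exact Finset.mem_filter.mpr ⟨hp, h1⟩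
        simpa using this
      set A' := (A.erase (1, n)).erase (1, j) with hA'def
      have hA'sub : A' ⊆ A := (Finset.erase_subset _ _).trans (Finset.erase_subset _ _)
      have hA'mem : ∀ p ∈ A, 2 ≤ p.1 → p ∈ A' := by
        intro p hp h2
        refine Finset.mem_erase.mpr ⟨?_, Finset.mem_erase.mpr ⟨?_, hp⟩⟩ <;>
          · intro h; rw [h] at h2; simp at h2
      have hclass : ∀ p ∈ A', (2 ≤ p.1 ∧ p.1 < p.2 ∧ p.2 ≤ j) ∨
          (j + 1 ≤ p.1 ∧ p.1 < p.2 ∧ p.2 ≤ n) := by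
        intro p hp
        have hpA := hA'sub hp
        have hw := hC.within _ hpA
        have hp1 : 2 ≤ p.1 := by
          rcases Nat.lt_or_ge p.1 2 with h | h
          · exfalso
            have h1 : p.1 = 1 := by omega
            rcases hpair p hpA h1 with h' | h' <;>
              · rw [h', hA'def] at hp; simp at hp
          · exact h
        rcases le_or_gt p.2 j with h | h
        · left; exact ⟨hp1, hw.2.1, h⟩
        rcases le_or_gt (j + 1) p.1 with h' | h'
        · right; exact ⟨h', hw.2.1, hw.2.2⟩
        exfalso
        rcases Nat.eq_or_lt_of_le (by omega : p.1 ≤ j) with he | hlt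
        · exact hC.mix j ⟨ld_pos_of_mem (p := (1, j)) hjA, he ▸ rd_pos_of_mem hpA⟩
        · exact hC.nc _ hjA _ hpA ⟨by omega, by omega, by omega⟩
      set B := A'.filter (fun p => p.2 ≤ j) with hBdef
      set C := A'.filter (fun p => ¬ p.2 ≤ j) with hCdef
      have hBsub : B ⊆ A := (Finset.filter_subset _ _).trans hA'sub
      have hCsub : C ⊆ A := (Finset.filter_subset _ _).trans hA'sub
      -- B is a connected zigzag stack on [2, j]
      have hCB : CZS 2 j B := by
        refine ⟨?_, fun p hp q hq => hC.nc p (hBsub hp) q (hBsub hq), ?_, ?_, ?_⟩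
        · intro p hp
          obtain ⟨hpA', hple⟩ := Finset.mem_filter.mp hp
          rcases hclass p hpA' with h | h
          · exact ⟨h.1, h.2.1, hple⟩
          · omega
        · intro v
          have h1 := ld_mono hBsub v
          have h2 := rd_mono hBsub v
          have := hC.deg2 v
          unfold deg at *
          omega
        · intro v ⟨h1, h2⟩
          exact hC.mix v ⟨le_trans h1 (ld_mono hBsub v), le_trans h2 (rd_mono hBsub v)⟩
        · intro u v h1 h2 h3 h4
          refine conn_restrict (S := {v : ℕ | 2 ≤ v ∧ v ≤ j}) (x := j) ?_ ?_ ?_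
            (hC.conn u v (by omega) (by omega) (by omega) (by omega))
            (by simp; omega) (by simp; omega)
          · intro p hp hp1 hp2
            simp only [Set.mem_setOf_eq] at hp1 hp2
            exact Finset.mem_filter.mpr ⟨hA'mem p hp hp1.1, hp2.2⟩
          · intro p hp hp1 hp2
            exfalso
            simp only [Set.mem_setOf_eq] at hp1 hp2
            have hw := hC.within _ hp
            have hpA' := hA'mem p hp hp1.1
            rcases hclass p hpA' with h | h <;> omega
          · intro p hp hp1 hp2
            simp only [Set.mem_setOf_eq] at hp1 hp2
            have hw := hC.within _ hp
            by_cases h1 : p.1 = 1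
            · rcases hpair p hp h1 with h | h
              · exfalso; rw [h] at hp2; simp at hp2 <;> omega
              · rw [h]
            · exfalso
              have hpA' := hA'mem p hp (by omega)
              rcases hclass p hpA' with h | h <;> omega
      have hldB : ld B j ≤ 1 := by
        have hmem : (1, j) ∈ A.erase (1, n) :=
          Finset.mem_erase.mpr ⟨by simpa [Prod.ext_iff] using hjn, hjA⟩
        have e1 := ld_erase (A := A.erase (1, n)) (a := 1) (v := j) hmem
        rw [← hA'def] at e1
        have e2 : ld (A.erase (1, n)) j ≤ ld A j := ld_mono (Finset.erase_subset _ _) j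
        have e3 : ld A j ≤ 2 := by have := hC.deg2 j; unfold deg at this; omega
        have e4 : ld B j ≤ ld A' j := ld_mono (Finset.filter_subset _ _) j
        omega
      have hB : B = ZZ false 2 j :=
        uniq n false 2 j B (by omega) hCB (by intro h; cases h) (fun _ => hldB)
      -- C is a connected zigzag stack on [j+1, n]
      have hCC : CZS (j + 1) n C := by
        refine ⟨?_, fun p hp q hq => hC.nc p (hCsub hp) q (hCsub hq), ?_, ?_, ?_⟩
        · intro p hp
          obtain ⟨hpA', hple⟩ := Finset.mem_filter.mp hp
          rcases hclass p hpA' with h | h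
          · omega
          · exact h
        · intro v
          have h1 := ld_mono hCsub v
          have h2 := rd_mono hCsub v
          have := hC.deg2 v
          unfold deg at *
          omega
        · intro v ⟨h1, h2⟩
          exact hC.mix v ⟨le_trans h1 (ld_mono hCsub v), le_trans h2 (rd_mono hCsub v)⟩
        · intro u v h1 h2 h3 h4
          refine conn_restrict (S := {v : ℕ | j + 1 ≤ v ∧ v ≤ n}) (x := n) ?_ ?_ ?_
            (hC.conn u v (by omega) (by omega) (by omega) (by omega))
            (by simp; omega) (by simp; omega)
          · intro p hp hp1 hp2
            simp only [Set.mem_setOf_eq] at hp1 hp2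
            exact Finset.mem_filter.mpr ⟨hA'mem p hp (by omega), by omega⟩
          · intro p hp hp1 hp2
            exfalso
            simp only [Set.mem_setOf_eq] at hp1 hp2
            have hw := hC.within _ hp
            omega
          · intro p hp hp1 hp2
            simp only [Set.mem_setOf_eq] at hp1 hp2
            have hw := hC.within _ hp
            by_cases h1 : p.1 = 1
            · rcases hpair p hp h1 with h | h
              · rw [h]
              · exfalso; rw [h] at hp2; simp at hp2 <;> omega
            · exfalso
              have hpA' := hA'mem p hp (by omega)
              rcases hclass p hpA' with h | h <;> omega
      have hldC : ld C n ≤ 1 := by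
        have e1 := ld_erase (A := A) (a := 1) (v := n) htop
        have e2 : ld A n ≤ 2 := by have := hC.deg2 n; unfold deg at this; omega
        have e4 : ld C n ≤ ld (A.erase (1, n)) n := by
          apply ld_mono
          exact (Finset.filter_subset _ _).trans (Finset.erase_subset _ _)
        omega
      have hCeq : C = ZZ false (j + 1) n :=
        uniq n false (j + 1) n C (by omega) hCC (by intro h; cases h) (fun _ => hldC)
      -- assemble
      refine ⟨j - 1, by omega, by omega, ?_⟩
      have hj1 : j - 1 + 1 = j := by omega
      have hj2 : j - 1 + 2 = j + 1 := by omega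
      rw [Sfam, hj1, hj2, ← hB, ← hCeq, hBdef, hCdef,
        Finset.filter_union_filter_not_eq]
      have e1 : insert (1, j) A' = A.erase (1, n) := by
        rw [hA'def]
        exact Finset.insert_erase (Finset.mem_erase.mpr
          ⟨by simpa [Prod.ext_iff] using hjn, hjA⟩)
      rw [e1, Finset.insert_erase htop]
  · rintro ⟨k, hk1, hk2, rfl⟩
    have hC := Sfam_CZS hn hk1 hk2
    exact ⟨⟨⟨hC.within, hC.nc⟩, hC.deg2, hC.mix⟩, hC.conn⟩

end Final
/-- for `n ≥ 2`, the number of connected zigzag stacks on `[n]` is `n − 1`. -/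
theorem connected_zigzag_count (n : ℕ) (hn : 2 ≤ n) : connZigzagCount n = n - 1 := by
  classical
  have he : ∀ A : Arcs, (IsZigzag n A ∧ ConnectedOn n A) ↔
      A ∈ (Finset.Icc 1 (n - 1)).image (Sfam n) := by
    intro A
    rw [classify hn A]
    simp only [Finset.mem_image, Finset.mem_Icc]
    constructor
    · rintro ⟨k, h1, h2, rfl⟩; exact ⟨k, ⟨h1, h2⟩, rfl⟩
    · rintro ⟨k, ⟨h1, h2⟩, rfl⟩; exact ⟨k, h1, h2, rfl⟩
  unfold connZigzagCount
  rw [Nat.card_congr (Equiv.subtypeEquivRight he), Nat.card_eq_finsetCard,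
    Finset.card_image_of_injOn (Sfam_injOn hn), Nat.card_Icc]
  omega
end Paper
end
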